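/- Multiple mixing from a spectral gap: Let (X_i)_{i≥0} be a stationary Markov chain on (X,A) with transition probability P and invariant initial distribution ν, and suppose that for some m ∈ [1,∞] there is a complex Banach space B of measurable functions X → ℂ satisfying conditions (A), (B), (C), and (E). Then (X_i)_{i≥0} is multiple mixing with respect to B with d₀ = 0 and s = m/(m−1): for every p ∈ ℕ there exist an integer ℓ and a constant c > 0 such that for all f ∈ B with νf = 0 and ‖f‖_∞ ≤ 1, all integers i₀ ≤ i₁ ≤ … ≤ i_p, and all q ∈ {1,…,p}, |Cov( f(X_{i₀})···f(X_{i_{q−1}}), f(X_{i_q})···f(X_{i_p}) )| ≤ c ‖f‖_{L^s(ν)} ‖f‖_B^ℓ θ^{i_q − i_{q−1}}, where θ ∈ [0,1) is the rate from condition (C). -/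

import Mathlib

open MeasureTheory Filter ProbabilityTheory
open scoped ENNReal NNReal

namespace SECLT

/-! ### The space `ℓ^∞(S)` and Hoffmann–Jørgensen convergence in distribution -/

/-- The sup-distance between two `S`-indexed families of reals (the `ℓ^∞(S)` distance). -/
noncomputable def supDist {S : Type*} (x y : S → ℝ) : ℝ≥0∞ :=
  ⨆ s : S, ENNReal.ofReal |x s - y s|

/-- Continuity of a functional on `ℓ^∞(S)` with respect to the sup-distance. -/
def SupContinuous {S : Type*} (φ : (S → ℝ) → ℝ) : Prop :=
  ∀ x : S → ℝ, ∀ ε : ℝ, 0 < ε → ∃ δ : ℝ, 0 < δ ∧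
    ∀ y : S → ℝ, supDist x y ≤ ENNReal.ofReal δ → |φ x - φ y| ≤ ε

/-- Boundedness of a functional on `ℓ^∞(S)`. -/
def BoundedFunctional {S : Type*} (φ : (S → ℝ) → ℝ) : Prop :=
  ∃ M : ℝ, ∀ x, |φ x| ≤ M

/-- Outer expectation `E* Z = inf { E Y : Y measurable integrable, Y ≥ Z }`. -/
noncomputable def outerExp {Ω : Type*} [MeasurableSpace Ω] (P : Measure Ω) (Z : Ω → ℝ) : ℝ :=
  sInf {r : ℝ | ∃ Y : Ω → ℝ, Measurable Y ∧ Integrable Y P ∧ (∀ ω, Z ω ≤ Y ω) ∧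
    (∫ ω, Y ω ∂P) = r}

/-- Hoffmann–Jørgensen convergence in distribution in `ℓ^∞(S)`: `E*(φ(Y_n)) → E(φ(K))`
for all bounded sup-continuous `φ`. -/
def ConvInDistr {S Ω Ω' : Type*} [MeasurableSpace Ω] [MeasurableSpace Ω'] (P : Measure Ω)
    (Y : ℕ → Ω → S → ℝ) (P' : Measure Ω') (K : Ω' → S → ℝ) : Prop :=
  ∀ φ : (S → ℝ) → ℝ, BoundedFunctional φ → SupContinuous φ →
    Tendsto (fun n => outerExp P fun ω => φ (Y n ω)) atTop
      (nhds (outerExp P' fun ω => φ (K ω)))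

/-- A process indexed by `S` is a centred Gaussian process: every finite linear combination
of its values has a centred Gaussian distribution. -/
def IsCenteredGaussian {S Ω' : Type*} [MeasurableSpace Ω'] (P' : Measure Ω')
    (K : Ω' → S → ℝ) : Prop :=
  ∀ (k : ℕ) (pts : Fin k → S) (a : Fin k → ℝ), ∃ v : ℝ≥0,
    Measure.map (fun ω => ∑ i, a i * K ω (pts i)) P' = gaussianReal 0 v

/-- Total boundedness with respect to the sup-distance. -/
def SupTotallyBounded {S : Type*} (T : Set (S → ℝ)) : Prop :=
  ∀ δ : ℝ, 0 < δ → ∃ A : Finset (S → ℝ), ∀ x ∈ T, ∃ y ∈ A, supDist x y ≤ ENNReal.ofReal δ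

/-- Closedness with respect to the sup-distance. -/
def SupClosed' {S : Type*} (T : Set (S → ℝ)) : Prop :=
  ∀ x : S → ℝ, (∀ ε : ℝ, 0 < ε → ∃ y ∈ T, supDist x y ≤ ENNReal.ofReal ε) → x ∈ T

/-- Tightness of the law of an `ℓ^∞(S)`-valued random element: for every `ε > 0` there is a
compact (= totally bounded and closed) set carrying all but `ε` of the (outer) mass. -/
def TightProcess {S Ω' : Type*} [MeasurableSpace Ω'] (P' : Measure Ω')
    (K : Ω' → S → ℝ) : Prop :=
  ∀ ε : ℝ, 0 < ε → ∃ T : Set (S → ℝ), SupTotallyBounded T ∧ SupClosed' T ∧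
    P' {ω | K ω ∉ T} ≤ ENNReal.ofReal ε

/-- Weak measurability of an `ℓ^∞(S)`-valued random element: compositions with bounded
sup-continuous functionals are measurable. -/
def WeaklyMeasurable {S Ω' : Type*} [MeasurableSpace Ω'] (K : Ω' → S → ℝ) : Prop :=
  ∀ φ : (S → ℝ) → ℝ, BoundedFunctional φ → SupContinuous φ →
    Measurable fun ω => φ (K ω)

/-- Separability of an `ℓ^∞(S)`-valued random element: almost surely the values lie in the
sup-closure of a countable set. -/
def SeparableValued {S Ω' : Type*} [MeasurableSpace Ω'] (P' : Measure Ω')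
    (K : Ω' → S → ℝ) : Prop :=
  ∃ T : Set (S → ℝ), T.Countable ∧
    ∀ᵐ ω ∂P', ∀ ε : ℝ, 0 < ε → ∃ y ∈ T, supDist (K ω) y ≤ ENNReal.ofReal ε

/-! ### Processes, covariance, stationarity, the sequential empirical process -/

/-- Covariance of two real random variables. -/
noncomputable def cov {Ω : Type*} [MeasurableSpace Ω] (P : Measure Ω) (Y Z : Ω → ℝ) : ℝ :=
  (∫ ω, Y ω * Z ω ∂P) - (∫ ω, Y ω ∂P) * (∫ ω, Z ω ∂P)

/-- A uniformly (sup-norm) bounded class of functions. -/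
def UnifBounded {𝓧 : Type*} (F : Set (𝓧 → ℝ)) : Prop :=
  ∃ M : ℝ, ∀ f ∈ F, ∀ x, |f x| ≤ M

/-- Stationarity of a process: the joint law is invariant under the time shift. -/
def IsStationary {Ω 𝓧 : Type*} [MeasurableSpace Ω] [MeasurableSpace 𝓧] (P : Measure Ω)
    (X : ℕ → Ω → 𝓧) : Prop :=
  ∀ k : ℕ, Measure.map (fun ω (i : ℕ) => X (i + k) ω) P
    = Measure.map (fun ω (i : ℕ) => X i ω) P

/-- The normalized sequential partial sum
`n^{-1/2} ∑_{i=1}^{⌊nt⌋} (f(X_i) - μ f)`. -/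
noncomputable def seqSum {Ω 𝓧 : Type*} [MeasurableSpace 𝓧] (X : ℕ → Ω → 𝓧)
    (μ : Measure 𝓧) (f : 𝓧 → ℝ) (t : ℝ) (n : ℕ) (ω : Ω) : ℝ :=
  (Real.sqrt (n : ℝ))⁻¹ * ∑ i ∈ Finset.Icc 1 ⌊(n : ℝ) * t⌋₊, (f (X i ω) - ∫ x, f x ∂μ)

/-- The sequential empirical process `U_n`, as a random element of `ℓ^∞(F × [0,1])`. -/
noncomputable def seqEmpProc {Ω 𝓧 : Type*} [MeasurableSpace 𝓧] (X : ℕ → Ω → 𝓧)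
    (μ : Measure 𝓧) (F : Set (𝓧 → ℝ)) (n : ℕ) (ω : Ω) :
    (↥F × ↥(Set.Icc (0:ℝ) 1)) → ℝ :=
  fun p => seqSum X μ (p.1 : 𝓧 → ℝ) (p.2 : ℝ) n ω

/-- The limiting (Kiefer) covariance structure:
`Cov(K(f₁,t₁),K(f₂,t₂)) = min(t₁,t₂) (∑_{k≥0} Cov(f₁(X₀),f₂(X_k)) + ∑_{k≥1} Cov(f₁(X_k),f₂(X₀)))`. -/
def HasKieferCovariance {Ω Ω' 𝓧 : Type*} [MeasurableSpace Ω] [MeasurableSpace Ω']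
    [MeasurableSpace 𝓧] (P : Measure Ω) (X : ℕ → Ω → 𝓧) (F : Set (𝓧 → ℝ))
    (P' : Measure Ω') (K : Ω' → (↥F × ↥(Set.Icc (0:ℝ) 1)) → ℝ) : Prop :=
  ∀ (f₁ f₂ : ↥F) (t₁ t₂ : ↥(Set.Icc (0:ℝ) 1)),
    cov P' (fun ω => K ω (f₁, t₁)) (fun ω => K ω (f₂, t₂))
      = min (t₁ : ℝ) (t₂ : ℝ) *
        ((∑' k : ℕ, cov P (fun ω => (f₁ : 𝓧 → ℝ) (X 0 ω)) fun ω => (f₂ : 𝓧 → ℝ) (X k ω))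
          + ∑' k : ℕ, cov P (fun ω => (f₁ : 𝓧 → ℝ) (X (k + 1) ω)) fun ω => (f₂ : 𝓧 → ℝ) (X 0 ω))

/-! ### Bracketing numbers and entropy conditions -/

/-- `F` is covered by `n` brackets `[l_i, u_i]` with `l_i, u_i ∈ G ⊆ B'`, of `L^s(ν)`-size at
most `ε` and of `B'`-size at most `A`.  Here `toFun` realizes elements of `B'` as functions
and `nB` measures their size. -/
def CoversWithBrackets {𝓧 B' : Type*} [MeasurableSpace 𝓧] (ν : Measure 𝓧) (s : ℝ≥0∞)
    (nB : B' → ℝ≥0∞) (toFun : B' → 𝓧 → ℝ) (F : Set (𝓧 → ℝ)) (G : Set B')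
    (ε A : ℝ) (n : ℕ) : Prop :=
  ∃ l u : Fin n → B',
    (∀ i, l i ∈ G ∧ u i ∈ G ∧
      eLpNorm (fun x => toFun (u i) x - toFun (l i) x) s ν ≤ ENNReal.ofReal ε ∧
      nB (u i) ≤ ENNReal.ofReal A ∧ nB (l i) ≤ ENNReal.ofReal A) ∧
    ∀ f ∈ F, ∃ i, ∀ x, toFun (l i) x ≤ f x ∧ f x ≤ toFun (u i) x

/-- The bracketing number `N(ε, A, F, G, L^s(ν))` (as an extended natural). -/
noncomputable def bracketingNumber {𝓧 B' : Type*} [MeasurableSpace 𝓧] (ν : Measure 𝓧)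
    (s : ℝ≥0∞) (nB : B' → ℝ≥0∞) (toFun : B' → 𝓧 → ℝ) (F : Set (𝓧 → ℝ)) (G : Set B')
    (ε A : ℝ) : ℝ≥0∞ :=
  sInf {N : ℝ≥0∞ | ∃ n : ℕ, N = (n : ℝ≥0∞) ∧ CoversWithBrackets ν s nB toFun F G ε A n}

/-- The exponential entropy condition with exponent `γ`:
`∫₀¹ ε^r sup_{ε≤δ≤1} N²(δ, exp(C δ^{-1/γ}), F, G, L^s(ν)) dε < ∞`
for some `C > 0` and some `r > -1`. -/
def ExpEntropy {𝓧 B' : Type*} [MeasurableSpace 𝓧] (ν : Measure 𝓧) (s : ℝ≥0∞)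
    (nB : B' → ℝ≥0∞) (toFun : B' → 𝓧 → ℝ) (F : Set (𝓧 → ℝ)) (G : Set B') (γ : ℝ) : Prop :=
  ∃ C : ℝ, 0 < C ∧ ∃ r : ℝ, -1 < r ∧
    (∫⁻ ε in Set.Ioo (0:ℝ) 1,
      ENNReal.ofReal (ε ^ r) *
        (⨆ δ ∈ Set.Icc ε 1,
          (bracketingNumber ν s nB toFun F G δ (Real.exp (C * δ ^ (-γ⁻¹)))) ^ 2)) < ⊤

/-- The entropy condition with bracket-size function `Ψ`:
`∫₀¹ ε^r sup_{ε≤δ≤1} N²(δ, Ψ(δ⁻¹), F, G, L^s(ν)) dε < ∞`. -/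
def PsiEntropy {𝓧 B' : Type*} [MeasurableSpace 𝓧] (ν : Measure 𝓧) (s : ℝ≥0∞)
    (nB : B' → ℝ≥0∞) (toFun : B' → 𝓧 → ℝ) (F : Set (𝓧 → ℝ)) (G : Set B')
    (Ψ : ℝ → ℝ) (r : ℝ) : Prop :=
  (∫⁻ ε in Set.Ioo (0:ℝ) 1,
    ENNReal.ofReal (ε ^ r) *
      (⨆ δ ∈ Set.Icc ε 1, (bracketingNumber ν s nB toFun F G δ (Ψ δ⁻¹)) ^ 2)) < ⊤

/-! ### Finite dimensional sequential CLT and moment bounds -/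

/-- `V_n` converges in distribution (via Cramér–Wold) to the centered multivariate normal law
with covariance matrix `Sig`. -/
def CramerWoldLimit {Ω : Type*} [MeasurableSpace Ω] {k : ℕ} (P : Measure Ω)
    (V : ℕ → Ω → Fin k → ℝ) (Sig : Matrix (Fin k) (Fin k) ℝ) : Prop :=
  ∀ a : Fin k → ℝ, ∃ v : ℝ≥0, (v : ℝ) = ∑ i, ∑ j, a i * Sig i j * a j ∧
    ∀ φ : BoundedContinuousFunction ℝ ℝ,
      Tendsto (fun n => ∫ ω, φ (∑ i, a i * V n ω i) ∂P) atTop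
        (nhds (∫ y, φ y ∂(gaussianReal 0 v)))

/-- Assumption 1: the finite dimensional sequential CLT for `G`-observables. -/
def FidiSeqCLT {Ω 𝓧 C' : Type*} [MeasurableSpace Ω] [MeasurableSpace 𝓧] (P : Measure Ω)
    (X : ℕ → Ω → 𝓧) (μ : Measure 𝓧) (toFun : C' → 𝓧 → ℝ) (G : Set C') : Prop :=
  ∀ (k : ℕ) (g : Fin k → C'), (∀ i, g i ∈ G) → ∀ t : Fin k → ℝ,
    (∀ i, t i ∈ Set.Icc (0:ℝ) 1) →
    ∃ Sig : Matrix (Fin k) (Fin k) ℝ,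
      CramerWoldLimit P (fun n ω i => seqSum X μ (toFun (g i)) (t i) n ω) Sig

/-- Assumption 1 with the Kiefer covariance matrix
`Σ_{ij} = min(t_i,t_j) (∑_{k≥0} Cov(f_i(X₀),f_j(X_k)) + ∑_{k≥1} Cov(f_j(X₀),f_i(X_k)))`. -/
def FidiSeqCLTKiefer {Ω 𝓧 C' : Type*} [MeasurableSpace Ω] [MeasurableSpace 𝓧] (P : Measure Ω)
    (X : ℕ → Ω → 𝓧) (μ : Measure 𝓧) (toFun : C' → 𝓧 → ℝ) (G : Set C') : Prop :=
  ∀ (k : ℕ) (g : Fin k → C'), (∀ i, g i ∈ G) → ∀ t : Fin k → ℝ,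
    (∀ i, t i ∈ Set.Icc (0:ℝ) 1) →
    CramerWoldLimit P (fun n ω i => seqSum X μ (toFun (g i)) (t i) n ω)
      (fun i j => min (t i) (t j) *
        ((∑' k' : ℕ, cov P (fun ω => toFun (g i) (X 0 ω)) fun ω => toFun (g j) (X k' ω))
          + ∑' k' : ℕ, cov P (fun ω => toFun (g j) (X 0 ω)) fun ω => toFun (g i) (X (k' + 1) ω)))

/-- Assumption 2: the `2p`-th moment bound
`E[(∑_{i=1}^n (f(X_i)-μf))^{2p}] ≤ ∑_{i=1}^p n^i ‖f‖_s^i Φ_i(‖f‖_C)` for all `f ∈ G'`. -/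
def MomentBound2p {Ω 𝓧 C' : Type*} [MeasurableSpace Ω] [MeasurableSpace 𝓧] (P : Measure Ω)
    (X : ℕ → Ω → 𝓧) (μ : Measure 𝓧) (toFun : C' → 𝓧 → ℝ) (nC : C' → ℝ) (G' : Set C')
    (p : ℕ) (s : ℝ≥0∞) (Φ : ℕ → ℝ → ℝ) : Prop :=
  ∀ f ∈ G', ∀ n : ℕ,
    (∫ ω, (∑ i ∈ Finset.Icc 1 n, (toFun f (X i ω) - ∫ x, toFun f x ∂μ)) ^ (2 * p) ∂P)
      ≤ ∑ i ∈ Finset.Icc 1 p,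
          (n : ℝ) ^ i * (eLpNorm (toFun f) s μ).toReal ^ i * Φ i (nC f)

/-- The multiple mixing property with respect to the space realized by `toFun`,
with mixing rate `θ` and polynomial degree bound `d₀`. -/
def MultipleMixing {Ω 𝓧 C' : Type*} [MeasurableSpace Ω] [MeasurableSpace 𝓧] (P : Measure Ω)
    (X : ℕ → Ω → 𝓧) (μ : Measure 𝓧) (toFun : C' → 𝓧 → ℝ) (nC : C' → ℝ) (s : ℝ≥0∞)
    (θ : ℝ) (d₀ : ℕ) : Prop :=
  ∀ p : ℕ, 0 < p → ∃ (ℓ : ℕ) (Q : MvPolynomial (Fin p) ℝ), Q.totalDegree ≤ d₀ ∧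
    ∀ f : C', (∫ x, toFun f x ∂μ) = 0 → (∀ x, |toFun f x| ≤ 1) →
    ∀ i : ℕ → ℕ, Monotone i → ∀ q : ℕ, 1 ≤ q → q ≤ p →
      |cov P (fun ω => ∏ j ∈ Finset.range q, toFun f (X (i j) ω))
          (fun ω => ∏ j ∈ Finset.Icc q p, toFun f (X (i j) ω))|
        ≤ (eLpNorm (toFun f) s μ).toReal * nC f ^ ℓ *
            MvPolynomial.eval (fun j : Fin p => ((i ((j : ℕ) + 1) : ℝ) - (i (j : ℕ) : ℝ))) Q *
            θ ^ (i q - i (q - 1))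

/-! ### Time discretization -/

/-- `τ_q t`, the largest point of the form `(j-1) 2^{-q}`, `j = 1, …, 2^q`, below `t`. -/
noncomputable def tauq (q : ℕ) (t : ℝ) : ℝ :=
  (min ⌊(2:ℝ) ^ q * t⌋₊ (2 ^ q - 1) : ℕ) * ((2:ℝ) ^ q)⁻¹

/-- The dyadic partition interval `T_{q,j}` of `[0,1]` (for `j = 0, …, 2^q - 1`). -/
noncomputable def Tsetq (q j : ℕ) : Set ℝ :=
  if j + 1 = 2 ^ q then Set.Icc (1 - ((2:ℝ) ^ q)⁻¹) 1
  else Set.Ico ((j : ℝ) * ((2:ℝ) ^ q)⁻¹) (((j : ℝ) + 1) * ((2:ℝ) ^ q)⁻¹)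

/-! ### Markov chains and Banach spaces of functions -/

/-- The Markov property of `(X_i)` with transition kernel `κ`:
`E[h(X_0,…,X_n) g(X_{n+1})] = E[h(X_0,…,X_n) ∫ g dκ(X_n, ·)]` for bounded measurable `g, h`. -/
def IsMarkovChain {Ω 𝓧 : Type*} [MeasurableSpace Ω] [MeasurableSpace 𝓧] (P : Measure Ω)
    (X : ℕ → Ω → 𝓧) (κ : ProbabilityTheory.Kernel 𝓧 𝓧) : Prop :=
  ∀ n : ℕ, ∀ g : 𝓧 → ℝ, Measurable g → (∃ M, ∀ x, |g x| ≤ M) →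
  ∀ h : (Fin (n + 1) → 𝓧) → ℝ, Measurable h → (∃ M, ∀ v, |h v| ≤ M) →
    (∫ ω, h (fun i => X (i : ℕ) ω) * g (X (n + 1) ω) ∂P)
      = ∫ ω, h (fun i => X (i : ℕ) ω) * ∫ y, g y ∂(κ (X n ω)) ∂P

/-- Condition (A): `1 ∈ B`; `|f|, conj f ∈ B` for `f ∈ B`; elements of `B` are measurable;
Dirac measures are continuous functionals on `B`. -/
def CondA {𝓧 B : Type*} [MeasurableSpace 𝓧] [NormedAddCommGroup B] [NormedSpace ℂ B]
    (ι : B →ₗ[ℂ] 𝓧 → ℂ) : Prop :=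
  (∀ b : B, Measurable (ι b)) ∧
  (∃ one : B, ι one = fun _ => 1) ∧
  (∀ b : B, ∃ babs : B, ι babs = fun x => ((‖ι b x‖ : ℝ) : ℂ)) ∧
  (∀ b : B, ∃ bconj : B, ι bconj = fun x => starRingEnd ℂ (ι b x)) ∧
  (∀ x : 𝓧, ∃ c : ℝ, 0 ≤ c ∧ ∀ b : B, ‖ι b x‖ ≤ c * ‖b‖)

/-- Condition (B): `B` is continuously included in `L^m(ν)`. -/
def CondB {𝓧 B : Type*} [MeasurableSpace 𝓧] [NormedAddCommGroup B] [NormedSpace ℂ B]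
    (ι : B →ₗ[ℂ] 𝓧 → ℂ) (ν : Measure 𝓧) (m : ℝ≥0∞) : Prop :=
  ∃ K : ℝ, 0 < K ∧ ∀ b : B, eLpNorm (ι b) m ν ≤ ENNReal.ofReal (K * ‖b‖)

/-- Condition (C): geometric ergodicity of the operator `PB` on `B`,
`‖P^n f − (νf) 1‖_B ≤ κc ‖f‖_B θ^n`. -/
def CondC {𝓧 B : Type*} [MeasurableSpace 𝓧] [NormedAddCommGroup B] [NormedSpace ℂ B]
    (ι : B →ₗ[ℂ] 𝓧 → ℂ) (ν : Measure 𝓧) (one : B) (PB : B →L[ℂ] B)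
    (κc θ : ℝ) : Prop :=
  ∀ b : B, ∀ n : ℕ, ‖(PB ^ n) b - (∫ x, ι b x ∂ν) • one‖ ≤ κc * ‖b‖ * θ ^ n

/-- Condition (E): products of functions of `B` bounded by one belong to `B`, with
`‖fg‖_B ≤ C max(‖f‖_B, ‖g‖_B)^ℓ`. -/
def CondE {𝓧 B : Type*} [MeasurableSpace 𝓧] [NormedAddCommGroup B] [NormedSpace ℂ B]
    (ι : B →ₗ[ℂ] 𝓧 → ℂ) : Prop :=
  ∃ C : ℝ, 0 < C ∧ ∃ ℓ : ℕ, ∀ f g : B,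
    (∀ x, ‖ι f x‖ ≤ 1) → (∀ x, ‖ι g x‖ ≤ 1) →
    ∃ h : B, (∀ x, ι h x = ι f x * ι g x) ∧ ‖h‖ ≤ C * max ‖f‖ ‖g‖ ^ ℓ

/-- Compatibility of the abstract operator `PB` with the Markov kernel `κ`:
`(PB f)(x) = ∫ f dκ(x,·)`. -/
def MarkovOpCompat {𝓧 B : Type*} [MeasurableSpace 𝓧] [NormedAddCommGroup B]
    [NormedSpace ℂ B] (ι : B →ₗ[ℂ] 𝓧 → ℂ) (κ : ProbabilityTheory.Kernel 𝓧 𝓧)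
    (PB : B →L[ℂ] B) : Prop :=
  ∀ b : B, ∀ x, ι (PB b) x = ∫ y, ι b y ∂(κ x)

/-- Condition (D) for a real function `f`: the perturbed operators `P_{f,t} φ = P(e^{itf} φ)`
act on `B` for `t` near `0`, and `t ↦ P_{f,t}` is twice continuously differentiable with
`k`-th derivative at `0` given by `φ ↦ P((if)^k φ)`. -/
def CondD {𝓧 B : Type*} [MeasurableSpace 𝓧] [NormedAddCommGroup B] [NormedSpace ℂ B]
    (ι : B →ₗ[ℂ] 𝓧 → ℂ) (κ : ProbabilityTheory.Kernel 𝓧 𝓧) (f : 𝓧 → ℝ) : Prop :=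
  ∃ ε : ℝ, 0 < ε ∧ ∃ Q : ℝ → B →L[ℂ] B,
    (∀ t ∈ Set.Ioo (-ε) ε, ∀ φ : B, ∀ x,
      ι (Q t φ) x = ∫ y, Complex.exp (Complex.I * (t : ℂ) * (f y : ℂ)) * ι φ y ∂(κ x)) ∧
    ContDiffOn ℝ 2 Q (Set.Ioo (-ε) ε) ∧
    (∀ φ : B, ∀ x, ι (derivWithin Q (Set.Ioo (-ε) ε) 0 φ) x
        = ∫ y, (Complex.I * (f y : ℂ)) * ι φ y ∂(κ x)) ∧
    (∀ φ : B, ∀ x, ι (derivWithin (derivWithin Q (Set.Ioo (-ε) ε)) (Set.Ioo (-ε) ε) 0 φ) x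
        = ∫ y, (Complex.I * (f y : ℂ)) ^ 2 * ι φ y ∂(κ x))

/-- An element of `B` is real-valued. -/
def RealValued {𝓧 B : Type*} [NormedAddCommGroup B] [NormedSpace ℂ B]
    (ι : B →ₗ[ℂ] 𝓧 → ℂ) (b : B) : Prop :=
  ∀ x, (ι b x).im = 0

end SECLT

open SECLT

namespace SECLTAux

open MeasureTheory Filter ProbabilityTheory SECLT
open scoped ENNReal NNReal

variable {Ω 𝓧 B : Type} [MeasurableSpace Ω] [MeasurableSpace 𝓧]
  [NormedAddCommGroup B] [NormedSpace ℂ B]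

set_option linter.unusedVariables false
set_option linter.unusedSectionVars false

lemma integrable_of_bdd {α : Type*} [MeasurableSpace α] {μ : Measure α} [IsFiniteMeasure μ]
    {g : α → ℂ} (hg : AEStronglyMeasurable g μ) {M : ℝ} (hM : ∀ x, ‖g x‖ ≤ M) :
    Integrable g μ :=
  Integrable.mono' (integrable_const M) hg (Filter.Eventually.of_forall hM)

lemma integrable_of_bdd_re {α : Type*} [MeasurableSpace α] {μ : Measure α} [IsFiniteMeasure μ]
    {g : α → ℝ} (hg : AEStronglyMeasurable g μ) {M : ℝ} (hM : ∀ x, |g x| ≤ M) :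
    Integrable g μ :=
  Integrable.mono' (integrable_const M) hg (Filter.Eventually.of_forall hM)

lemma norm_int_le {α : Type*} [MeasurableSpace α] (μ : Measure α) [IsProbabilityMeasure μ]
    {g : α → ℂ} {M : ℝ} (hM : ∀ x, ‖g x‖ ≤ M) : ‖∫ x, g x ∂μ‖ ≤ M := by
  calc ‖∫ x, g x ∂μ‖ ≤ M * (μ Set.univ).toReal :=
        norm_integral_le_of_norm_le_const (Filter.Eventually.of_forall hM)
    _ = M := by simp

lemma int_re_eq {α : Type*} [MeasurableSpace α] {μ : Measure α} {f : α → ℂ}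
    (hf : Integrable f μ) : ∫ x, (f x).re ∂μ = (∫ x, f x ∂μ).re := by
  simpa using integral_re hf

lemma int_im_eq {α : Type*} [MeasurableSpace α] {μ : Measure α} {f : α → ℂ}
    (hf : Integrable f μ) : ∫ x, (f x).im ∂μ = (∫ x, f x ∂μ).im := by
  simpa using integral_im hf

lemma eLpNorm_ne_top_of_bdd {α : Type*} [MeasurableSpace α] {μ : Measure α}
    [IsProbabilityMeasure μ] {g : α → ℂ} {M : ℝ} (hM : ∀ x, ‖g x‖ ≤ M) (r : ℝ≥0∞) :
    eLpNorm g r μ ≠ ⊤ := by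
  refine lt_top_iff_ne_top.mp (lt_of_le_of_lt (eLpNorm_le_of_ae_bound
    (Filter.Eventually.of_forall hM)) ?_)
  simp [ENNReal.ofReal_lt_top]

lemma holder_abs {𝓧 : Type*} [MeasurableSpace 𝓧] {μ : Measure 𝓧} [IsProbabilityMeasure μ]
    {m s : ℝ≥0∞} (hms : 1 / m + 1 / s = 1)
    {φ γ : 𝓧 → ℂ} (hφ : Measurable φ) (hγ : Measurable γ)
    {Mφ Mγ : ℝ} (hφb : ∀ x, ‖φ x‖ ≤ Mφ) (hγb : ∀ x, ‖γ x‖ ≤ Mγ) :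
    ∫ x, ‖φ x‖ * ‖γ x‖ ∂μ ≤ (eLpNorm φ s μ).toReal * (eLpNorm γ m μ).toReal := by
  have h1 : eLpNorm (fun x => φ x * γ x) 1 μ ≤ eLpNorm φ s μ * eLpNorm γ m μ := by
    haveI : ENNReal.HolderTriple s m 1 := ⟨by rw [inv_one, ← hms, add_comm]; simp only [one_div]⟩
    simpa using eLpNorm_le_eLpNorm_mul_eLpNorm_of_nnnorm (r := 1) hφ.aestronglyMeasurable
      hγ.aestronglyMeasurable (· * ·) 1 (Filter.Eventually.of_forall fun x => by simp)
  have hprodb : ∀ x, ‖φ x * γ x‖ ≤ Mφ * Mγ := by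
    intro x
    rw [norm_mul]
    exact mul_le_mul (hφb x) (hγb x) (norm_nonneg _) ((norm_nonneg _).trans (hφb x))
  have h2 : ∫ x, ‖φ x‖ * ‖γ x‖ ∂μ = (eLpNorm (fun x => φ x * γ x) 1 μ).toReal := by
    rw [eLpNorm_one_eq_lintegral_enorm,
      ← integral_norm_eq_lintegral_enorm (f := fun x => φ x * γ x) ((hφ.mul hγ).aestronglyMeasurable)]
    simp_rw [norm_mul]
  rw [h2]
  have hne : eLpNorm φ s μ * eLpNorm γ m μ ≠ ⊤ :=
    ENNReal.mul_ne_top (eLpNorm_ne_top_of_bdd hφb s) (eLpNorm_ne_top_of_bdd hγb m)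
  calc (eLpNorm (fun x => φ x * γ x) 1 μ).toReal
      ≤ (eLpNorm φ s μ * eLpNorm γ m μ).toReal := ENNReal.toReal_mono hne h1
    _ = (eLpNorm φ s μ).toReal * (eLpNorm γ m μ).toReal := ENNReal.toReal_mul


/-- One Markov step with a complex bounded prefix and complex bounded observable. -/
lemma mstep (P : Measure Ω) [IsProbabilityMeasure P] (X : ℕ → Ω → 𝓧)
    (hXm : ∀ i, Measurable (X i)) (κ : ProbabilityTheory.Kernel 𝓧 𝓧) [IsMarkovKernel κ]
    (hMarkov : SECLT.IsMarkovChain P X κ)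
    (n : ℕ) (ψ : (Fin (n+1) → 𝓧) → ℂ) (hψm : Measurable ψ) (hψb : ∀ v, ‖ψ v‖ ≤ 1)
    (g : 𝓧 → ℂ) (hgm : Measurable g) (M : ℝ) (hgb : ∀ x, ‖g x‖ ≤ M) :
    ∫ ω, ψ (fun j => X (j : ℕ) ω) * g (X (n+1) ω) ∂P
      = ∫ ω, ψ (fun j => X (j : ℕ) ω) * ∫ y, g y ∂(κ (X n ω)) ∂P := by
  have hTm : Measurable (fun ω (j : Fin (n+1)) => X (j : ℕ) ω) :=
    measurable_pi_lambda _ fun j => hXm _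
  have hFm : Measurable (fun ω => ψ (fun j => X (j : ℕ) ω)) := hψm.comp hTm
  have hgXm : Measurable (fun ω => g (X (n+1) ω)) := hgm.comp (hXm _)
  -- the kernel-averaged observable
  have hKgm : Measurable (fun x => ∫ y, g y ∂(κ x)) := by
    have h1 : StronglyMeasurable (Function.uncurry fun (_ : 𝓧) (y : 𝓧) => g y) :=
      hgm.stronglyMeasurable.comp_measurable measurable_snd
    exact (h1.integral_kernel_prod_right (κ := κ)).measurable
  have hKgb : ∀ x, ‖∫ y, g y ∂(κ x)‖ ≤ M := fun x => norm_int_le (κ x) hgb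
  have hgint : ∀ x, Integrable g (κ x) :=
    fun x => integrable_of_bdd hgm.aestronglyMeasurable hgb
  -- bounds for re/im parts
  have hgre : ∀ x, |(g x).re| ≤ M := fun x => (Complex.abs_re_le_norm _).trans
    (by exact hgb x)
  have hgim : ∀ x, |(g x).im| ≤ M := fun x => (Complex.abs_im_le_norm _).trans
    (by exact hgb x)
  have hψre : ∀ v, |(ψ v).re| ≤ 1 := fun v => (Complex.abs_re_le_norm _).trans
    (by exact hψb v)
  have hψim : ∀ v, |(ψ v).im| ≤ 1 := fun v => (Complex.abs_im_le_norm _).trans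
    (by exact hψb v)
  -- the four real Markov identities
  have h00 := hMarkov n (fun x => (g x).re) (Complex.measurable_re.comp hgm) ⟨M, hgre⟩
    (fun v => (ψ v).re) (Complex.measurable_re.comp hψm) ⟨1, hψre⟩
  have h01 := hMarkov n (fun x => (g x).im) (Complex.measurable_im.comp hgm) ⟨M, hgim⟩
    (fun v => (ψ v).re) (Complex.measurable_re.comp hψm) ⟨1, hψre⟩
  have h10 := hMarkov n (fun x => (g x).re) (Complex.measurable_re.comp hgm) ⟨M, hgre⟩
    (fun v => (ψ v).im) (Complex.measurable_im.comp hψm) ⟨1, hψim⟩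
  have h11 := hMarkov n (fun x => (g x).im) (Complex.measurable_im.comp hgm) ⟨M, hgim⟩
    (fun v => (ψ v).im) (Complex.measurable_im.comp hψm) ⟨1, hψim⟩
  -- rewrite inner kernel integrals of re/im as re/im of kernel integral
  have hreK : ∀ x, ∫ y, (g y).re ∂(κ x) = (∫ y, g y ∂(κ x)).re :=
    fun x => int_re_eq (hgint x)
  have himK : ∀ x, ∫ y, (g y).im ∂(κ x) = (∫ y, g y ∂(κ x)).im :=
    fun x => int_im_eq (hgint x)
  simp only [hreK, himK] at h00 h01 h10 h11
  -- integrability of the two complex integrands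
  have hint1 : Integrable (fun ω => ψ (fun j => X (j : ℕ) ω) * g (X (n+1) ω)) P := by
    refine integrable_of_bdd (hFm.mul hgXm).aestronglyMeasurable (M := M) fun ω => ?_
    rw [norm_mul]
    simpa using mul_le_mul (hψb _) (hgb _) (norm_nonneg _) zero_le_one
  have hint2 : Integrable (fun ω => ψ (fun j => X (j : ℕ) ω) * ∫ y, g y ∂(κ (X n ω))) P := by
    refine integrable_of_bdd (hFm.mul (hKgm.comp (hXm n))).aestronglyMeasurable
      (M := M) fun ω => ?_
    rw [norm_mul]
    simpa using mul_le_mul (hψb _) (hKgb _) (norm_nonneg _) zero_le_one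
  -- integrability of the real part products
  have hi : ∀ (u : Ω → ℝ) (hu : Measurable u) (hub : ∀ ω, |u ω| ≤ 1)
      (w : Ω → ℝ) (hw : Measurable w) (hwb : ∀ ω, |w ω| ≤ M),
      Integrable (fun ω => u ω * w ω) P := by
    intro u hu hub w hw hwb
    refine Integrable.mono' (integrable_const M) (hu.mul hw).aestronglyMeasurable
      (Filter.Eventually.of_forall fun ω => ?_)
    rw [Real.norm_eq_abs, abs_mul]
    simpa using mul_le_mul (hub _) (hwb _) (abs_nonneg _) zero_le_one
  set u1 : Ω → ℝ := fun ω => (ψ (fun j : Fin (n+1) => X (j : ℕ) ω)).re with hu1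
  set u2 : Ω → ℝ := fun ω => (ψ (fun j : Fin (n+1) => X (j : ℕ) ω)).im with hu2
  set w1 : Ω → ℝ := fun ω => (g (X (n+1) ω)).re with hw1
  set w2 : Ω → ℝ := fun ω => (g (X (n+1) ω)).im with hw2
  set k1 : Ω → ℝ := fun ω => (∫ y, g y ∂(κ (X n ω))).re with hk1
  set k2 : Ω → ℝ := fun ω => (∫ y, g y ∂(κ (X n ω))).im with hk2
  have hu1m : Measurable u1 := Complex.measurable_re.comp hFm
  have hu2m : Measurable u2 := Complex.measurable_im.comp hFm
  have hw1m : Measurable w1 := Complex.measurable_re.comp hgXm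
  have hw2m : Measurable w2 := Complex.measurable_im.comp hgXm
  have hk1m : Measurable k1 := (Complex.measurable_re.comp hKgm).comp (hXm n)
  have hk2m : Measurable k2 := (Complex.measurable_im.comp hKgm).comp (hXm n)
  have hu1b : ∀ ω, |u1 ω| ≤ 1 := fun ω => hψre _
  have hu2b : ∀ ω, |u2 ω| ≤ 1 := fun ω => hψim _
  have hw1b : ∀ ω, |w1 ω| ≤ M := fun ω => hgre _
  have hw2b : ∀ ω, |w2 ω| ≤ M := fun ω => hgim _
  have hk1b : ∀ ω, |k1 ω| ≤ M := fun ω => (Complex.abs_re_le_norm _).trans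
    (by exact hKgb _)
  have hk2b : ∀ ω, |k2 ω| ≤ M := fun ω => (Complex.abs_im_le_norm _).trans
    (by exact hKgb _)
  apply Complex.ext
  · rw [← int_re_eq hint1, ← int_re_eq hint2]
    have e1 : ∫ ω, (u1 ω * w1 ω - u2 ω * w2 ω) ∂P
        = (∫ ω, u1 ω * w1 ω ∂P) - ∫ ω, u2 ω * w2 ω ∂P :=
      integral_sub (hi u1 hu1m hu1b w1 hw1m hw1b) (hi u2 hu2m hu2b w2 hw2m hw2b)
    have e2 : ∫ ω, (u1 ω * k1 ω - u2 ω * k2 ω) ∂P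
        = (∫ ω, u1 ω * k1 ω ∂P) - ∫ ω, u2 ω * k2 ω ∂P :=
      integral_sub (hi u1 hu1m hu1b k1 hk1m hk1b) (hi u2 hu2m hu2b k2 hk2m hk2b)
    calc ∫ ω, ((ψ fun j => X (j:ℕ) ω) * g (X (n+1) ω)).re ∂P
        = ∫ ω, (u1 ω * w1 ω - u2 ω * w2 ω) ∂P := by
          simp only [Complex.mul_re]; rfl
      _ = (∫ ω, u1 ω * w1 ω ∂P) - ∫ ω, u2 ω * w2 ω ∂P := e1
      _ = (∫ ω, u1 ω * k1 ω ∂P) - ∫ ω, u2 ω * k2 ω ∂P := by rw [h00, h11]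
      _ = ∫ ω, (u1 ω * k1 ω - u2 ω * k2 ω) ∂P := e2.symm
      _ = ∫ ω, ((ψ fun j => X (j:ℕ) ω) * ∫ y, g y ∂(κ (X n ω))).re ∂P := by
          simp only [Complex.mul_re]; rfl
  · rw [← int_im_eq hint1, ← int_im_eq hint2]
    have e3 : ∫ ω, (u1 ω * w2 ω + u2 ω * w1 ω) ∂P
        = (∫ ω, u1 ω * w2 ω ∂P) + ∫ ω, u2 ω * w1 ω ∂P :=
      integral_add (hi u1 hu1m hu1b w2 hw2m hw2b) (hi u2 hu2m hu2b w1 hw1m hw1b)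
    have e4 : ∫ ω, (u1 ω * k2 ω + u2 ω * k1 ω) ∂P
        = (∫ ω, u1 ω * k2 ω ∂P) + ∫ ω, u2 ω * k1 ω ∂P :=
      integral_add (hi u1 hu1m hu1b k2 hk2m hk2b) (hi u2 hu2m hu2b k1 hk1m hk1b)
    calc ∫ ω, ((ψ fun j => X (j:ℕ) ω) * g (X (n+1) ω)).im ∂P
        = ∫ ω, (u1 ω * w2 ω + u2 ω * w1 ω) ∂P := by
          simp only [Complex.mul_im]; rfl
      _ = (∫ ω, u1 ω * w2 ω ∂P) + ∫ ω, u2 ω * w1 ω ∂P := e3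
      _ = (∫ ω, u1 ω * k2 ω ∂P) + ∫ ω, u2 ω * k1 ω ∂P := by rw [h01, h10]
      _ = ∫ ω, (u1 ω * k2 ω + u2 ω * k1 ω) ∂P := e4.symm
      _ = ∫ ω, ((ψ fun j => X (j:ℕ) ω) * ∫ y, g y ∂(κ (X n ω))).im ∂P := by
          simp only [Complex.mul_im]; rfl


/-- The law of `X k` is `ν` for every `k`. -/
lemma law (P : Measure Ω) [IsProbabilityMeasure P] (X : ℕ → Ω → 𝓧)
    (hXm : ∀ i, Measurable (X i)) (κ : ProbabilityTheory.Kernel 𝓧 𝓧) [IsMarkovKernel κ]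
    (hMarkov : SECLT.IsMarkovChain P X κ)
    (ν : Measure 𝓧) [IsProbabilityMeasure ν]
    (hinv : ν.bind (fun x => κ x) = ν)
    (hinit : Measure.map (X 0) P = ν) :
    ∀ k, Measure.map (X k) P = ν := by
  intro k
  induction k with
  | zero => exact hinit
  | succ k ih =>
    ext A hA
    have hre : (Measure.map (X (k+1)) P) A = P (X (k+1) ⁻¹' A) :=
      Measure.map_apply (hXm _) hA
    have hgm : Measurable (A.indicator (fun _ => (1:ℝ))) := measurable_const.indicator hA
    have hgb : ∀ x, |A.indicator (fun _ => (1:ℝ)) x| ≤ 1 := by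
      intro x; by_cases hx : x ∈ A <;> simp [Set.indicator_apply, hx]
    have hmk := hMarkov k (A.indicator fun _ => (1:ℝ)) hgm ⟨1, hgb⟩
      (fun _ => (1:ℝ)) measurable_const ⟨1, fun _ => by simp⟩
    simp only [one_mul] at hmk
    have hL : ∫ ω, A.indicator (fun _ => (1:ℝ)) (X (k+1) ω) ∂P
        = (P (X (k+1) ⁻¹' A)).toReal := by
      have hfun : (fun ω => A.indicator (fun _ => (1:ℝ)) (X (k+1) ω))
          = (X (k+1) ⁻¹' A).indicator (fun _ => (1:ℝ)) := by
        ext ω; by_cases hx : X (k+1) ω ∈ A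
        · simp [Set.indicator_apply, hx]
        · simp [Set.indicator_apply, hx]
      rw [hfun]
      exact integral_indicator_one ((hXm _) hA)
    have hinner : ∀ x : 𝓧, ∫ y, A.indicator (fun _ => (1:ℝ)) y ∂(κ x) = (κ x A).toReal := by
      intro x
      exact integral_indicator_one hA
    have hR : ∫ ω, (κ (X k ω) A).toReal ∂P = (ν A).toReal := by
      have h1 : ∫ ω, (κ (X k ω) A).toReal ∂P
          = ∫ x, (κ x A).toReal ∂(Measure.map (X k) P) :=
        (integral_map (hXm k).aemeasurable
          ((Kernel.measurable_coe κ hA).ennreal_toReal).aestronglyMeasurable).symm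
      rw [h1, ih, integral_toReal ((Kernel.measurable_coe κ hA).aemeasurable)
        (ae_of_all _ fun x => measure_lt_top _ _)]
      congr 1
      rw [← Measure.bind_apply hA (Kernel.measurable κ).aemeasurable, hinv]
    have hkey : (P (X (k+1) ⁻¹' A)).toReal = (ν A).toReal := by
      rw [← hL, hmk]
      simp_rw [hinner]
      exact hR
    rw [hre]
    exact (ENNReal.toReal_eq_toReal_iff' (measure_ne_top _ _) (measure_ne_top _ _)).mp hkey

/-- Expectation of a function of `X k` equals the `ν` integral. -/
lemma int_eq {E : Type*} [NormedAddCommGroup E] [NormedSpace ℝ E]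
    (P : Measure Ω) [IsProbabilityMeasure P] (X : ℕ → Ω → 𝓧)
    (hXm : ∀ i, Measurable (X i)) (κ : ProbabilityTheory.Kernel 𝓧 𝓧) [IsMarkovKernel κ]
    (hMarkov : SECLT.IsMarkovChain P X κ)
    (ν : Measure 𝓧) [IsProbabilityMeasure ν]
    (hinv : ν.bind (fun x => κ x) = ν)
    (hinit : Measure.map (X 0) P = ν)
    (k : ℕ) (Φ : 𝓧 → E) (hΦ : AEStronglyMeasurable Φ ν) :
    ∫ ω, Φ (X k ω) ∂P = ∫ x, Φ x ∂ν := by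
  have h := law P X hXm κ hMarkov ν hinv hinit k
  rw [← h]
  exact (integral_map (hXm k).aemeasurable (by rw [h]; exact hΦ)).symm

/-- Pointwise bound for powers of the Markov operator. -/
lemma pb_ptw (κ : ProbabilityTheory.Kernel 𝓧 𝓧) [IsMarkovKernel κ]
    (ι : B →ₗ[ℂ] 𝓧 → ℂ) (PB : B →L[ℂ] B)
    (hPB : ∀ b x, ι (PB b) x = ∫ y, ι b y ∂(κ x))
    (c : B) (M : ℝ) (hc : ∀ x, ‖ι c x‖ ≤ M) :
    ∀ g x, ‖ι ((PB^g) c) x‖ ≤ M := by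
  intro g
  induction g with
  | zero => simpa using hc
  | succ g ih =>
    intro x
    have h1 : (PB^(g+1)) c = PB ((PB^g) c) := by
      rw [pow_succ']
      rfl
    rw [h1, hPB]
    exact norm_int_le (κ x) ih


/-- Pulling an observable back over `m'` steps of the chain. -/
lemma pull (P : Measure Ω) [IsProbabilityMeasure P] (X : ℕ → Ω → 𝓧)
    (hXm : ∀ i, Measurable (X i)) (κ : ProbabilityTheory.Kernel 𝓧 𝓧) [IsMarkovKernel κ]
    (hMarkov : SECLT.IsMarkovChain P X κ)
    (ι : B →ₗ[ℂ] 𝓧 → ℂ) (hAm : ∀ b, Measurable (ι b)) (PB : B →L[ℂ] B)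
    (hPB : ∀ b x, ι (PB b) x = ∫ y, ι b y ∂(κ x)) :
    ∀ (m' n : ℕ) (ψ : (Fin (n+1) → 𝓧) → ℂ), Measurable ψ → (∀ v, ‖ψ v‖ ≤ 1) →
    ∀ (c : B), (∀ x, ‖ι c x‖ ≤ 1) →
    ∫ ω, ψ (fun j => X (j : ℕ) ω) * ι c (X (n + m') ω) ∂P
      = ∫ ω, ψ (fun j => X (j : ℕ) ω) * ι ((PB^m') c) (X n ω) ∂P := by
  intro m'
  induction m' with
  | zero =>
    intro n ψ _ _ c _
    simp [pow_zero, ContinuousLinearMap.one_apply]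
  | succ m' ih =>
    intro n ψ hψm hψb c hc
    have hle : n + 1 ≤ n + m' + 1 := by omega
    set ψ' : (Fin (n+m'+1) → 𝓧) → ℂ := fun v => ψ (fun j => v (Fin.castLE hle j)) with hψ'
    have hψ'm : Measurable ψ' :=
      hψm.comp (measurable_pi_lambda _ fun j => measurable_pi_apply _)
    have hψ'b : ∀ v, ‖ψ' v‖ ≤ 1 := fun v => hψb _
    have h1 : ∫ ω, ψ (fun j => X (j : ℕ) ω) * ι c (X (n + (m'+1)) ω) ∂P
        = ∫ ω, ψ' (fun j => X (j : ℕ) ω) * ι c (X ((n+m') + 1) ω) ∂P := rfl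
    rw [h1, mstep P X hXm κ hMarkov (n+m') ψ' hψ'm hψ'b (ι c) (hAm c) 1 hc]
    have h2 : ∀ ω, ∫ y, ι c y ∂(κ (X (n+m') ω)) = ι (PB c) (X (n+m') ω) :=
      fun ω => (hPB c _).symm
    simp_rw [h2]
    have hcl : ∀ x, ‖ι (PB c) x‖ ≤ 1 := fun x => by
      rw [hPB]; exact norm_int_le (κ x) hc
    have h3 : ∫ ω, ψ' (fun j => X (j : ℕ) ω) * ι (PB c) (X (n+m') ω) ∂P
        = ∫ ω, ψ (fun j => X (j : ℕ) ω) * ι (PB c) (X (n + m') ω) ∂P := rfl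
    rw [h3, ih n ψ hψm hψb (PB c) hcl]
    have h4 : (PB^m') (PB c) = (PB^(m'+1)) c := by
      rw [pow_succ]
      rfl
    rw [h4]

/-- Collapsing a block of observables into a single element of `B`. -/
lemma chain (P : Measure Ω) [IsProbabilityMeasure P] (X : ℕ → Ω → 𝓧)
    (hXm : ∀ i, Measurable (X i)) (κ : ProbabilityTheory.Kernel 𝓧 𝓧) [IsMarkovKernel κ]
    (hMarkov : SECLT.IsMarkovChain P X κ)
    (ι : B →ₗ[ℂ] 𝓧 → ℂ) (hAm : ∀ b, Measurable (ι b)) (PB : B →L[ℂ] B)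
    (hPB : ∀ b x, ι (PB b) x = ∫ y, ι b y ∂(κ x))
    (b : B) (hbpt : ∀ x, ‖ι b x‖ ≤ 1)
    (Ψ : ℝ → ℝ) (hΨmono : Monotone Ψ)
    (hStep : ∀ (g : ℕ) (u : B), (∀ x, ‖ι u x‖ ≤ 1) → ∃ w : B,
      (∀ x, ι w x = ι b x * ι ((PB^g) u) x) ∧ (∀ x, ‖ι w x‖ ≤ 1) ∧ ‖w‖ ≤ Ψ ‖u‖)
    (τ : ℕ → ℕ) (hτ : Monotone τ) :
    ∀ (k : ℕ) (c : B), (∀ x, ‖ι c x‖ ≤ 1) →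
    ∃ v : B, (∀ x, ‖ι v x‖ ≤ 1) ∧ ‖v‖ ≤ Ψ^[k] ‖c‖ ∧
      ∀ (n₀ : ℕ), n₀ ≤ τ 0 → ∀ (ψ : (Fin (n₀+1) → 𝓧) → ℂ), Measurable ψ →
        (∀ w', ‖ψ w'‖ ≤ 1) →
        ∫ ω, ψ (fun j => X (j : ℕ) ω) *
            ((∏ j ∈ Finset.range k, ι b (X (τ j) ω)) * ι c (X (τ k) ω)) ∂P
        = ∫ ω, ψ (fun j => X (j : ℕ) ω) * ι v (X (τ 0) ω) ∂P := by
  intro k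
  induction k with
  | zero =>
    intro c hc
    refine ⟨c, hc, by simp, fun n₀ hn₀ ψ hψm hψb => ?_⟩
    simp
  | succ k ih =>
    intro c hc
    obtain ⟨w, hw_eq, hw_pt, hw_n⟩ := hStep (τ (k+1) - τ k) c hc
    obtain ⟨v, hv_pt, hv_n, hv_eq⟩ := ih w hw_pt
    refine ⟨v, hv_pt, ?_, ?_⟩
    · calc ‖v‖ ≤ Ψ^[k] ‖w‖ := hv_n
        _ ≤ Ψ^[k] (Ψ ‖c‖) := hΨmono.iterate k hw_n
        _ = Ψ^[k+1] ‖c‖ := (Function.iterate_succ_apply Ψ k ‖c‖).symm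
    · intro n₀ hn₀ ψ hψm hψb
      have hle : n₀ + 1 ≤ τ k + 1 := by
        have := hτ (Nat.zero_le k); omega
      -- the extended prefix at time τ k
      set ψ₂ : (Fin (τ k + 1) → 𝓧) → ℂ := fun v' =>
        ψ (fun j => v' (Fin.castLE hle j)) *
          ∏ j ∈ Finset.range (k+1),
            ι b (v' ⟨min (τ j) (τ k), Nat.lt_succ_of_le (min_le_right _ _)⟩) with hψ₂
      have hψ₂m : Measurable ψ₂ := by
        apply Measurable.mul
        · exact hψm.comp (measurable_pi_lambda _ fun j => measurable_pi_apply _)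
        · exact Finset.measurable_prod _ fun j _ =>
            (hAm b).comp (measurable_pi_apply _)
      have hψ₂b : ∀ v', ‖ψ₂ v'‖ ≤ 1 := by
        intro v'
        rw [hψ₂]
        simp only
        rw [norm_mul]
        have h1 : ‖∏ j ∈ Finset.range (k+1),
            ι b (v' ⟨min (τ j) (τ k), Nat.lt_succ_of_le (min_le_right _ _)⟩)‖ ≤ 1 := by
          rw [norm_prod]
          exact Finset.prod_le_one (fun j _ => norm_nonneg _) (fun j _ => hbpt _)
        calc ‖ψ _‖ * ‖∏ j ∈ Finset.range (k+1), _‖ ≤ 1 * 1 :=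
              mul_le_mul (hψb _) h1 (norm_nonneg _) zero_le_one
          _ = 1 := by ring
      have hd : τ k + (τ (k+1) - τ k) = τ (k+1) :=
        Nat.add_sub_cancel' (hτ (Nat.le_succ k))
      -- step A : rewrite the integrand with the extended prefix
      have hA : ∫ ω, ψ (fun j => X (j : ℕ) ω) *
            ((∏ j ∈ Finset.range (k+1), ι b (X (τ j) ω)) * ι c (X (τ (k+1)) ω)) ∂P
          = ∫ ω, ψ₂ (fun j => X (j : ℕ) ω) * ι c (X (τ k + (τ (k+1) - τ k)) ω) ∂P := by
        congr 1
        funext ω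
        rw [hψ₂]
        simp only
        rw [hd]
        have hprod : ∏ j ∈ Finset.range (k+1),
            ι b (X ((⟨min (τ j) (τ k), Nat.lt_succ_of_le (min_le_right _ _)⟩ : Fin (τ k + 1)) : ℕ) ω)
            = ∏ j ∈ Finset.range (k+1), ι b (X (τ j) ω) := by
          refine Finset.prod_congr rfl fun j hj => ?_
          have hjk : j ≤ k := Nat.lt_succ_iff.mp (Finset.mem_range.mp hj)
          have : min (τ j) (τ k) = τ j := min_eq_left (hτ hjk)
          simp [this]
        calc ψ (fun j => X (j : ℕ) ω) *
              ((∏ j ∈ Finset.range (k+1), ι b (X (τ j) ω)) * ι c (X (τ (k+1)) ω))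
            = (ψ (fun j => X (j : ℕ) ω) * (∏ j ∈ Finset.range (k+1), ι b (X (τ j) ω))) *
                ι c (X (τ (k+1)) ω) := by ring
          _ = _ := by rw [hprod]; simp only [Fin.coe_castLE]
      rw [hA, pull P X hXm κ hMarkov ι hAm PB hPB (τ (k+1) - τ k) (τ k) ψ₂ hψ₂m hψ₂b c hc]
      -- step B : merge the top factor into w and use the induction hypothesis
      have hB : ∫ ω, ψ₂ (fun j => X (j : ℕ) ω) * ι ((PB^(τ (k+1) - τ k)) c) (X (τ k) ω) ∂P
          = ∫ ω, ψ (fun j => X (j : ℕ) ω) *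
              ((∏ j ∈ Finset.range k, ι b (X (τ j) ω)) * ι w (X (τ k) ω)) ∂P := by
        congr 1
        funext ω
        rw [hψ₂]
        simp only
        have hprod : ∏ j ∈ Finset.range (k+1),
            ι b (X ((⟨min (τ j) (τ k), Nat.lt_succ_of_le (min_le_right _ _)⟩ : Fin (τ k + 1)) : ℕ) ω)
            = ∏ j ∈ Finset.range (k+1), ι b (X (τ j) ω) := by
          refine Finset.prod_congr rfl fun j hj => ?_
          have hjk : j ≤ k := Nat.lt_succ_iff.mp (Finset.mem_range.mp hj)
          have : min (τ j) (τ k) = τ j := min_eq_left (hτ hjk)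
          simp [this]
        rw [hprod, Finset.prod_range_succ, hw_eq]
        simp only [Fin.coe_castLE]
        ring
      rw [hB]
      exact hv_eq n₀ hn₀ ψ hψm hψb


/-- `L¹`-type bound for the `ν`-integral of `ι c` in terms of `‖c‖`. -/
lemma nu_norm_int (ν : Measure 𝓧) [IsProbabilityMeasure ν] (ι : B →ₗ[ℂ] 𝓧 → ℂ)
    (hAm : ∀ b : B, Measurable (ι b)) (m : ℝ≥0∞) (hm : 1 ≤ m)
    (K : ℝ) (hK0 : 0 < K)
    (hKle : ∀ b : B, eLpNorm (ι b) m ν ≤ ENNReal.ofReal (K * ‖b‖))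
    (c : B) : ‖∫ x, ι c x ∂ν‖ ≤ K * ‖c‖ := by
  have hmem : eLpNorm (ι c) m ν ≠ ⊤ :=
    ((hKle c).trans_lt ENNReal.ofReal_lt_top).ne
  calc ‖∫ x, ι c x ∂ν‖ ≤ ∫ x, ‖ι c x‖ ∂ν := norm_integral_le_integral_norm _
    _ = (eLpNorm (ι c) 1 ν).toReal := by
        rw [eLpNorm_one_eq_lintegral_enorm,
          integral_norm_eq_lintegral_enorm (hAm c).aestronglyMeasurable]
    _ ≤ (eLpNorm (ι c) m ν).toReal := by
        refine ENNReal.toReal_mono hmem ?_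
        exact eLpNorm_le_eLpNorm_of_exponent_le hm (hAm c).aestronglyMeasurable
    _ ≤ (ENNReal.ofReal (K * ‖c‖)).toReal := ENNReal.toReal_mono ENNReal.ofReal_ne_top (hKle c)
    _ = K * ‖c‖ := ENNReal.toReal_ofReal (by positivity)

/-- Norm bound for powers of the Markov operator. -/
lemma pb_norm (ν : Measure 𝓧) [IsProbabilityMeasure ν] (ι : B →ₗ[ℂ] 𝓧 → ℂ)
    (hAm : ∀ b : B, Measurable (ι b)) (m : ℝ≥0∞) (hm : 1 ≤ m)
    (K : ℝ) (hK0 : 0 < K)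
    (hKle : ∀ b : B, eLpNorm (ι b) m ν ≤ ENNReal.ofReal (K * ‖b‖))
    (one : B) (PB : B →L[ℂ] B) (κc θ : ℝ) (hκc : 0 < κc) (hθ : θ ∈ Set.Ico (0:ℝ) 1)
    (hC : ∀ b : B, ∀ n : ℕ, ‖(PB ^ n) b - (∫ x, ι b x ∂ν) • one‖ ≤ κc * ‖b‖ * θ ^ n)
    (c : B) (g : ℕ) : ‖(PB^g) c‖ ≤ (κc + K * ‖one‖) * ‖c‖ := by
  have h1 := hC c g
  have hθ1 : θ ^ g ≤ 1 := pow_le_one₀ hθ.1 hθ.2.le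
  calc ‖(PB^g) c‖ = ‖((PB^g) c - (∫ x, ι c x ∂ν) • one) + (∫ x, ι c x ∂ν) • one‖ := by
        rw [sub_add_cancel]
    _ ≤ ‖(PB^g) c - (∫ x, ι c x ∂ν) • one‖ + ‖(∫ x, ι c x ∂ν) • one‖ := norm_add_le _ _
    _ ≤ κc * ‖c‖ * θ ^ g + ‖∫ x, ι c x ∂ν‖ * ‖one‖ := by
        rw [norm_smul]
        exact add_le_add h1 le_rfl
    _ ≤ κc * ‖c‖ + (K * ‖c‖) * ‖one‖ := by
        refine add_le_add ?_ ?_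
        · exact mul_le_of_le_one_right (by positivity) hθ1
        · exact mul_le_mul_of_nonneg_right
            (nu_norm_int ν ι hAm m hm K hK0 hKle c) (norm_nonneg _)
    _ = (κc + K * ‖one‖) * ‖c‖ := by ring

/-- Scaled product estimate from condition (E), in the case `ℓ' ≥ 2`. -/
lemma prod_min (ι : B →ₗ[ℂ] 𝓧 → ℂ) (C : ℝ) (hC1 : 1 ≤ C) (L' : ℕ) (hL2 : 2 ≤ L')
    (hE' : ∀ f g : B, (∀ x, ‖ι f x‖ ≤ 1) → (∀ x, ‖ι g x‖ ≤ 1) →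
      ∃ h : B, (∀ x, ι h x = ι f x * ι g x) ∧ ‖h‖ ≤ C * max ‖f‖ ‖g‖ ^ L')
    (u v : B) (hu : ∀ x, ‖ι u x‖ ≤ 1) (hv : ∀ x, ‖ι v x‖ ≤ 1) :
    ∃ w : B, (∀ x, ι w x = ι u x * ι v x) ∧ (∀ x, ‖ι w x‖ ≤ 1) ∧
      ‖w‖ ≤ C * ‖v‖ * ‖u‖ ^ (L' - 1) := by
  by_cases hu0 : u = 0
  · refine ⟨0, fun x => ?_, fun x => by simp, by rw [norm_zero]; positivity⟩
    rw [hu0]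
    simp
  by_cases hv0 : v = 0
  · refine ⟨0, fun x => ?_, fun x => by simp, by rw [norm_zero]; positivity⟩
    rw [hv0]
    simp
  have hun : (0:ℝ) < ‖u‖ := norm_pos_iff.mpr hu0
  have hvn : (0:ℝ) < ‖v‖ := norm_pos_iff.mpr hv0
  have hL1 : L' - 1 + 1 = L' := by omega
  rcases le_total ‖u‖ ‖v‖ with hle | hle
  · set μ : ℝ := ‖v‖ / ‖u‖ with hμ
    have hμ1 : 1 ≤ μ := (one_le_div hun).mpr hle
    have hμ0 : 0 < μ := lt_of_lt_of_le one_pos hμ1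
    have hsc : ∀ x, ι ((μ⁻¹ : ℂ) • v) x = (μ⁻¹ : ℂ) * ι v x := by
      intro x
      rw [LinearMap.map_smul]
      simp [smul_eq_mul]
    have hscn : ‖(μ⁻¹ : ℂ) • v‖ = ‖u‖ := by
      rw [norm_smul]
      have : ‖((μ : ℂ))⁻¹‖ = μ⁻¹ := by
        rw [norm_inv, Complex.norm_real, Real.norm_eq_abs, abs_of_pos hμ0]
      rw [this, hμ]
      field_simp
    have hscpt : ∀ x, ‖ι ((μ⁻¹ : ℂ) • v) x‖ ≤ 1 := by
      intro x
      rw [hsc, norm_mul]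
      have h1 : ‖((μ : ℂ))⁻¹‖ ≤ 1 := by
        rw [norm_inv, Complex.norm_real, Real.norm_eq_abs, abs_of_pos hμ0]
        exact inv_le_one_of_one_le₀ hμ1
      calc ‖(μ⁻¹ : ℂ)‖ * ‖ι v x‖ ≤ 1 * 1 :=
            mul_le_mul h1 (hv x) (norm_nonneg _) zero_le_one
        _ = 1 := by ring
    obtain ⟨h, hh_eq, hh_n⟩ := hE' u ((μ⁻¹ : ℂ) • v) hu hscpt
    refine ⟨(μ : ℂ) • h, fun x => ?_, fun x => ?_, ?_⟩
    · rw [LinearMap.map_smul]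
      simp only [Pi.smul_apply, smul_eq_mul]
      rw [hh_eq x, hsc x]
      have : (μ : ℂ) ≠ 0 := by
        simp only [ne_eq, Complex.ofReal_eq_zero]
        positivity
      field_simp
      try ring
    · rw [LinearMap.map_smul]
      simp only [Pi.smul_apply, smul_eq_mul]
      rw [hh_eq x, hsc x, norm_mul, norm_mul]
      have hμn : ‖(μ : ℂ)‖ = μ := by
        rw [Complex.norm_real, Real.norm_eq_abs]; exact abs_of_pos hμ0
      have hμin : ‖((μ : ℂ))⁻¹‖ = μ⁻¹ := by
        rw [norm_inv, Complex.norm_real, Real.norm_eq_abs, abs_of_pos hμ0]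
      rw [norm_mul, hμn, hμin]
      calc μ * (‖ι u x‖ * (μ⁻¹ * ‖ι v x‖)) = ‖ι u x‖ * ‖ι v x‖ := by field_simp; try ring
        _ ≤ 1 * 1 := mul_le_mul (hu x) (hv x) (norm_nonneg _) zero_le_one
        _ = 1 := by ring
    · rw [norm_smul]
      have hμn : ‖(μ : ℂ)‖ = μ := by
        rw [Complex.norm_real, Real.norm_eq_abs]; exact abs_of_pos hμ0
      rw [hμn, hscn] at *
      calc μ * ‖h‖ ≤ μ * (C * max ‖u‖ ‖u‖ ^ L') :=
            mul_le_mul_of_nonneg_left hh_n hμ0.le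
        _ = μ * (C * ‖u‖ ^ L') := by rw [max_self]
        _ = C * ‖v‖ * ‖u‖ ^ (L' - 1) := by
            rw [← hL1, pow_succ, hμ, Nat.add_sub_cancel]
            field_simp
  · set μ : ℝ := ‖u‖ / ‖v‖ with hμ
    have hμ1 : 1 ≤ μ := (one_le_div hvn).mpr hle
    have hμ0 : 0 < μ := lt_of_lt_of_le one_pos hμ1
    have hsc : ∀ x, ι ((μ⁻¹ : ℂ) • u) x = (μ⁻¹ : ℂ) * ι u x := by
      intro x
      rw [LinearMap.map_smul]
      simp [smul_eq_mul]
    have hscn : ‖(μ⁻¹ : ℂ) • u‖ = ‖v‖ := by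
      rw [norm_smul]
      have : ‖((μ : ℂ))⁻¹‖ = μ⁻¹ := by
        rw [norm_inv, Complex.norm_real, Real.norm_eq_abs, abs_of_pos hμ0]
      rw [this, hμ]
      field_simp
    have hscpt : ∀ x, ‖ι ((μ⁻¹ : ℂ) • u) x‖ ≤ 1 := by
      intro x
      rw [hsc, norm_mul]
      have h1 : ‖((μ : ℂ))⁻¹‖ ≤ 1 := by
        rw [norm_inv, Complex.norm_real, Real.norm_eq_abs, abs_of_pos hμ0]
        exact inv_le_one_of_one_le₀ hμ1
      calc ‖(μ⁻¹ : ℂ)‖ * ‖ι u x‖ ≤ 1 * 1 :=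
            mul_le_mul h1 (hu x) (norm_nonneg _) zero_le_one
        _ = 1 := by ring
    obtain ⟨h, hh_eq, hh_n⟩ := hE' ((μ⁻¹ : ℂ) • u) v hscpt hv
    refine ⟨(μ : ℂ) • h, fun x => ?_, fun x => ?_, ?_⟩
    · rw [LinearMap.map_smul]
      simp only [Pi.smul_apply, smul_eq_mul]
      rw [hh_eq x, hsc x]
      have : (μ : ℂ) ≠ 0 := by
        simp only [ne_eq, Complex.ofReal_eq_zero]
        positivity
      field_simp
      try ring
    · rw [LinearMap.map_smul]
      simp only [Pi.smul_apply, smul_eq_mul]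
      rw [hh_eq x, hsc x, norm_mul, norm_mul]
      have hμn : ‖(μ : ℂ)‖ = μ := by
        rw [Complex.norm_real, Real.norm_eq_abs]; exact abs_of_pos hμ0
      have hμin : ‖((μ : ℂ))⁻¹‖ = μ⁻¹ := by
        rw [norm_inv, Complex.norm_real, Real.norm_eq_abs, abs_of_pos hμ0]
      rw [norm_mul, hμn, hμin]
      calc μ * (μ⁻¹ * ‖ι u x‖ * ‖ι v x‖) = ‖ι u x‖ * ‖ι v x‖ := by field_simp
        _ ≤ 1 * 1 := mul_le_mul (hu x) (hv x) (norm_nonneg _) zero_le_one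
        _ = 1 := by ring
    · rw [norm_smul]
      have hμn : ‖(μ : ℂ)‖ = μ := by
        rw [Complex.norm_real, Real.norm_eq_abs]; exact abs_of_pos hμ0
      rw [hμn, hscn] at *
      have hmaxeq : max ‖v‖ ‖v‖ = ‖v‖ := max_self _
      calc μ * ‖h‖ ≤ μ * (C * max ‖v‖ ‖v‖ ^ L') :=
            mul_le_mul_of_nonneg_left hh_n hμ0.le
        _ = μ * (C * ‖v‖ ^ L') := by rw [hmaxeq]
        _ = C * ‖u‖ * ‖v‖ ^ (L' - 1) := by
            rw [← hL1, pow_succ, hμ, Nat.add_sub_cancel]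
            field_simp
        _ ≤ C * ‖v‖ * ‖u‖ ^ (L' - 1) := by
            have h2 : L' - 1 = (L' - 2) + 1 := by omega
            rw [h2, pow_succ, pow_succ]
            have hp : ‖v‖ ^ (L' - 2) ≤ ‖u‖ ^ (L' - 2) :=
              pow_le_pow_left₀ hvn.le hle _
            calc C * ‖u‖ * (‖v‖ ^ (L' - 2) * ‖v‖)
                ≤ C * ‖u‖ * (‖u‖ ^ (L' - 2) * ‖v‖) := by
                  refine mul_le_mul_of_nonneg_left
                    (mul_le_mul_of_nonneg_right hp hvn.le) (by positivity)
              _ = C * ‖v‖ * (‖u‖ ^ (L' - 2) * ‖u‖) := by ring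

/-- Iterates of a linear map. -/
lemma iter_linear (β : ℝ) : ∀ (k : ℕ) (x : ℝ), (fun y => β * y)^[k] x = β^k * x := by
  intro k
  induction k with
  | zero => intro x; simp
  | succ k ih =>
    intro x
    rw [Function.iterate_succ_apply', ih, pow_succ]
    ring

/-- Iterates of the max-form map. -/
lemma iter_maxform (C D t : ℝ) (hC : 1 ≤ C) (hD : 1 ≤ D) (ht : 0 ≤ t) :
    ∀ (k : ℕ) (x : ℝ), 0 ≤ x → (fun y => C * max t (D * y))^[k] x ≤ (C*D)^k * max t x := by
  intro k
  induction k with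
  | zero => intro x hx; simp
  | succ k ih =>
    intro x hx
    rw [Function.iterate_succ_apply]
    have h1 : (fun y => C * max t (D * y))^[k] (C * max t (D * x))
        ≤ (C*D)^k * max t (C * max t (D * x)) := ih _ (by positivity)
    refine h1.trans ?_
    have h2 : max t (C * max t (D * x)) ≤ (C * D) * max t x := by
      rw [max_le_iff]
      constructor
      · calc t ≤ max t x := le_max_left _ _
          _ ≤ (C*D) * max t x := le_mul_of_one_le_left (le_trans ht (le_max_left _ _)) (by nlinarith)
      · have h3 : max t (D * x) ≤ D * max t x := by
          rw [max_le_iff]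
          constructor
          · calc t ≤ max t x := le_max_left _ _
              _ ≤ D * max t x := le_mul_of_one_le_left (le_trans ht (le_max_left _ _)) hD
          · exact mul_le_mul_of_nonneg_left (le_max_right _ _) (by linarith)
        calc C * max t (D * x) ≤ C * (D * max t x) := mul_le_mul_of_nonneg_left h3 (by linarith)
          _ = (C * D) * max t x := by ring
    calc (C*D)^k * max t (C * max t (D * x)) ≤ (C*D)^k * ((C*D) * max t x) :=
          mul_le_mul_of_nonneg_left h2 (by positivity)
      _ = (C*D)^(k+1) * max t x := by rw [pow_succ]; ring
  
/-- Iterates of a constant map. -/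
lemma iter_const (C : ℝ) : ∀ (k : ℕ) (x : ℝ), (fun _ => C)^[k] x ≤ max x C := by
  intro k
  induction k with
  | zero => intro x; simp
  | succ k ih =>
    intro x
    rw [Function.iterate_succ_apply]
    calc (fun _ => C)^[k] C ≤ max C C := ih C
      _ = C := max_self C
      _ ≤ max x C := le_max_right _ _


/-- The central covariance identity. -/
lemma cov_identity
    (P : Measure Ω) [IsProbabilityMeasure P] (X : ℕ → Ω → 𝓧)
    (hXm : ∀ i, Measurable (X i)) (κ : ProbabilityTheory.Kernel 𝓧 𝓧) [IsMarkovKernel κ]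
    (hMarkov : SECLT.IsMarkovChain P X κ)
    (ν : Measure 𝓧) [IsProbabilityMeasure ν]
    (hinv : ν.bind (fun x => κ x) = ν)
    (hinit : Measure.map (X 0) P = ν)
    (ι : B →ₗ[ℂ] 𝓧 → ℂ) (hAm : ∀ b, Measurable (ι b)) (PB : B →L[ℂ] B)
    (hPB : ∀ b x, ι (PB b) x = ∫ y, ι b y ∂(κ x))
    (one : B) (hone : ι one = fun _ => 1)
    (b : B) (hbpt : ∀ x, ‖ι b x‖ ≤ 1)
    (b' : B) (hb'eq : ∀ x, ι b' x = ι b x)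
    (Ψ : ℝ → ℝ) (hΨmono : Monotone Ψ)
    (hStep : ∀ (g : ℕ) (u : B), (∀ x, ‖ι u x‖ ≤ 1) → ∃ w : B,
      (∀ x, ι w x = ι b x * ι ((PB^g) u) x) ∧ (∀ x, ‖ι w x‖ ≤ 1) ∧ ‖w‖ ≤ Ψ ‖u‖)
    (p q : ℕ) (hq1 : 1 ≤ q) (hqp : q ≤ p)
    (i : ℕ → ℕ) (hi : Monotone i) :
    ∃ v : B, (∀ x, ‖ι v x‖ ≤ 1) ∧ ‖v‖ ≤ Ψ^[p - q] ‖b'‖ ∧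
      (∫ ω, (∏ j ∈ Finset.range q, ι b (X (i j) ω))
          * (∏ j ∈ Finset.Icc q p, ι b (X (i j) ω)) ∂P)
        - (∫ ω, ∏ j ∈ Finset.range q, ι b (X (i j) ω) ∂P)
          * (∫ ω, ∏ j ∈ Finset.Icc q p, ι b (X (i j) ω) ∂P)
      = ∫ ω, (∏ j ∈ Finset.range q, ι b (X (i j) ω)) *
          ι ((PB ^ (i q - i (q-1))) v - (∫ x, ι v x ∂ν) • one) (X (i (q-1)) ω) ∂P := by
  have hb'pt : ∀ x, ‖ι b' x‖ ≤ 1 := fun x => by rw [hb'eq]; exact hbpt x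
  -- the inner-block time scale
  set τ : ℕ → ℕ := fun j => i (q + j) with hτdef
  have hτ : Monotone τ := fun j k hjk => hi (by omega)
  obtain ⟨v, hvpt, hvn, hveq⟩ := chain P X hXm κ hMarkov ι hAm PB hPB b hbpt Ψ hΨmono hStep
    τ hτ (p - q) b' hb'pt
  refine ⟨v, hvpt, hvn, ?_⟩
  have hqp' : q + (p - q) = p := by omega
  -- rewrite the Icc product as a range product with distinguished last factor
  have hIcc : ∀ ω, (∏ j ∈ Finset.Icc q p, ι b (X (i j) ω))
      = (∏ j ∈ Finset.range (p - q), ι b (X (τ j) ω)) * ι b' (X (τ (p - q)) ω) := by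
    intro ω
    rw [← Finset.Ico_add_one_right_eq_Icc, Finset.prod_Ico_eq_prod_range]
    have h1 : p + 1 - q = (p - q) + 1 := by omega
    rw [h1, Finset.prod_range_succ]
    congr 1
    rw [hb'eq, hτdef]
  -- the measurability of ι-observables
  have hXmeasb : ∀ (c : B) (k : ℕ), Measurable (fun ω => ι c (X k ω)) :=
    fun c k => (hAm c).comp (hXm k)
  -- E₃ : expectation of the second block
  have hE3 : (∫ ω, ∏ j ∈ Finset.Icc q p, ι b (X (i j) ω) ∂P) = ∫ x, ι v x ∂ν := by
    have h1 : (∫ ω, ∏ j ∈ Finset.Icc q p, ι b (X (i j) ω) ∂P)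
        = ∫ ω, (fun _ : Fin 1 → 𝓧 => (1:ℂ)) (fun j => X (j : ℕ) ω) *
            ((∏ j ∈ Finset.range (p - q), ι b (X (τ j) ω)) * ι b' (X (τ (p - q)) ω)) ∂P := by
      congr 1
      funext ω
      rw [hIcc ω, one_mul]
    rw [h1, hveq 0 (Nat.zero_le _) (fun _ => (1:ℂ)) measurable_const (fun _ => by simp)]
    simp_rw [one_mul]
    exact int_eq P X hXm κ hMarkov ν hinv hinit (τ 0) (ι v) (hAm v).aestronglyMeasurable
  -- the first-block prefix function
  have hmin : ∀ j, j < q → min (i j) (i (q - 1)) = i j := by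
    intro j hj
    exact min_eq_left (hi (by omega))
  set ψH : (Fin (i (q-1) + 1) → 𝓧) → ℂ := fun v' =>
    ∏ j ∈ Finset.range q, ι b (v' ⟨min (i j) (i (q-1)), Nat.lt_succ_of_le (min_le_right _ _)⟩)
    with hψHdef
  have hψHm : Measurable ψH :=
    Finset.measurable_prod _ fun j _ => (hAm b).comp (measurable_pi_apply _)
  have hψHb : ∀ v', ‖ψH v'‖ ≤ 1 := by
    intro v'
    rw [hψHdef]
    simp only
    rw [norm_prod]
    exact Finset.prod_le_one (fun j _ => norm_nonneg _) (fun j _ => hbpt _)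
  have hψHtuple : ∀ ω, ψH (fun j => X (j : ℕ) ω) = ∏ j ∈ Finset.range q, ι b (X (i j) ω) := by
    intro ω
    rw [hψHdef]
    simp only
    refine Finset.prod_congr rfl fun j hj => ?_
    have hj' : j < q := Finset.mem_range.mp hj
    rw [hmin j hj']
  -- E₁ : pull the whole product back to time i (q-1)
  have hN : i (q-1) + (i q - i (q-1)) = i q := Nat.add_sub_cancel' (hi (by omega))
  have hE1 : (∫ ω, (∏ j ∈ Finset.range q, ι b (X (i j) ω))
        * (∏ j ∈ Finset.Icc q p, ι b (X (i j) ω)) ∂P)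
      = ∫ ω, (∏ j ∈ Finset.range q, ι b (X (i j) ω)) *
          ι ((PB ^ (i q - i (q-1))) v) (X (i (q-1)) ω) ∂P := by
    have h1 : (∫ ω, (∏ j ∈ Finset.range q, ι b (X (i j) ω))
          * (∏ j ∈ Finset.Icc q p, ι b (X (i j) ω)) ∂P)
        = ∫ ω, ψH (fun j => X (j : ℕ) ω) *
            ((∏ j ∈ Finset.range (p - q), ι b (X (τ j) ω)) * ι b' (X (τ (p - q)) ω)) ∂P := by
      congr 1
      funext ω
      rw [hψHtuple ω, hIcc ω]
    have hn₀ : i (q-1) ≤ τ 0 := by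
      rw [hτdef]
      exact hi (by omega)
    rw [h1, hveq (i (q-1)) hn₀ ψH hψHm hψHb]
    have h2 : ∫ ω, ψH (fun j => X (j : ℕ) ω) * ι v (X (τ 0) ω) ∂P
        = ∫ ω, ψH (fun j => X (j : ℕ) ω) * ι v (X (i (q-1) + (i q - i (q-1))) ω) ∂P := by
      congr 1
      funext ω
      have hτ0 : τ 0 = i (q - 1) + (i q - i (q - 1)) := by
        rw [hτdef]; simp only [Nat.add_zero]; exact hN.symm
      rw [hτ0]
    rw [h2, pull P X hXm κ hMarkov ι hAm PB hPB (i q - i (q-1)) (i (q-1)) ψH hψHm hψHb v hvpt]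
    congr 1
    funext ω
    rw [hψHtuple ω]
  -- split (PB^N) v into the fluctuation and the mean
  set N : ℕ := i q - i (q-1) with hNdef
  set r : B := (PB ^ N) v - (∫ x, ι v x ∂ν) • one with hrdef
  have hsplit : ∀ x, ι ((PB ^ N) v) x = ι r x + (∫ x', ι v x' ∂ν) := by
    intro x
    rw [hrdef, LinearMap.map_sub, LinearMap.map_smul]
    simp only [Pi.sub_apply, Pi.smul_apply, smul_eq_mul]
    rw [hone]
    ring
  -- bounds
  have hPBvpt : ∀ x, ‖ι ((PB ^ N) v) x‖ ≤ 1 := fun x => pb_ptw κ ι PB hPB v 1 hvpt N x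
  have hνv : ‖∫ x, ι v x ∂ν‖ ≤ 1 := norm_int_le ν hvpt
  have hrpt : ∀ x, ‖ι r x‖ ≤ 2 := by
    intro x
    have h1 : ι r x = ι ((PB ^ N) v) x - (∫ x', ι v x' ∂ν) := by
      rw [hrdef, LinearMap.map_sub, LinearMap.map_smul]
      simp only [Pi.sub_apply, Pi.smul_apply, smul_eq_mul]
      rw [hone]
      ring
    rw [h1]
    calc ‖ι ((PB ^ N) v) x - (∫ x', ι v x' ∂ν)‖
        ≤ ‖ι ((PB ^ N) v) x‖ + ‖∫ x', ι v x' ∂ν‖ := norm_sub_le _ _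
      _ ≤ 1 + 1 := add_le_add (hPBvpt x) hνv
      _ = 2 := by norm_num
  -- H1 bounded and measurable
  have hH1m : Measurable (fun ω => ∏ j ∈ Finset.range q, ι b (X (i j) ω)) :=
    Finset.measurable_prod _ fun j _ => hXmeasb b (i j)
  have hH1b : ∀ ω, ‖∏ j ∈ Finset.range q, ι b (X (i j) ω)‖ ≤ 1 := by
    intro ω
    rw [norm_prod]
    exact Finset.prod_le_one (fun j _ => norm_nonneg _) (fun j _ => hbpt _)
  -- split the integral
  have hintr : Integrable (fun ω => (∏ j ∈ Finset.range q, ι b (X (i j) ω)) *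
      ι r (X (i (q-1)) ω)) P := by
    refine Integrable.mono' (integrable_const 2)
      (hH1m.mul ((hAm r).comp (hXm _))).aestronglyMeasurable
      (Filter.Eventually.of_forall fun ω => ?_)
    rw [norm_mul]
    simpa using mul_le_mul (hH1b ω) (hrpt _) (norm_nonneg _) zero_le_one
  have hintH1 : Integrable (fun ω => ∏ j ∈ Finset.range q, ι b (X (i j) ω)) P := by
    refine Integrable.mono' (integrable_const 1) hH1m.aestronglyMeasurable
      (Filter.Eventually.of_forall fun ω => hH1b ω)
  have hE1' : (∫ ω, (∏ j ∈ Finset.range q, ι b (X (i j) ω)) *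
        ι ((PB ^ N) v) (X (i (q-1)) ω) ∂P)
      = (∫ ω, (∏ j ∈ Finset.range q, ι b (X (i j) ω)) * ι r (X (i (q-1)) ω) ∂P)
        + (∫ x, ι v x ∂ν) * (∫ ω, ∏ j ∈ Finset.range q, ι b (X (i j) ω) ∂P) := by
    have h1 : ∀ ω, (∏ j ∈ Finset.range q, ι b (X (i j) ω)) * ι ((PB ^ N) v) (X (i (q-1)) ω)
        = (∏ j ∈ Finset.range q, ι b (X (i j) ω)) * ι r (X (i (q-1)) ω)
          + (∫ x, ι v x ∂ν) * (∏ j ∈ Finset.range q, ι b (X (i j) ω)) := by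
      intro ω
      rw [hsplit]
      ring
    simp_rw [h1]
    rw [integral_add hintr (by exact hintH1.const_mul _)]
    congr 1
    exact integral_const_mul _ _
  rw [hE1, hE3, hE1']
  ring


/-- The final Hölder estimate for the covariance term. -/
lemma cov_final
    (P : Measure Ω) [IsProbabilityMeasure P] (X : ℕ → Ω → 𝓧)
    (hXm : ∀ i, Measurable (X i)) (κ : ProbabilityTheory.Kernel 𝓧 𝓧) [IsMarkovKernel κ]
    (hMarkov : SECLT.IsMarkovChain P X κ)
    (ν : Measure 𝓧) [IsProbabilityMeasure ν]
    (hinv : ν.bind (fun x => κ x) = ν)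
    (hinit : Measure.map (X 0) P = ν)
    (ι : B →ₗ[ℂ] 𝓧 → ℂ) (hAm : ∀ b, Measurable (ι b))
    (m s : ℝ≥0∞) (hm : 1 ≤ m) (hms : 1 / m + 1 / s = 1)
    (K : ℝ) (hK0 : 0 < K)
    (hKle : ∀ c : B, eLpNorm (ι c) m ν ≤ ENNReal.ofReal (K * ‖c‖))
    (b : B) (hbpt : ∀ x, ‖ι b x‖ ≤ 1)
    (q : ℕ) (hq1 : 1 ≤ q) (i : ℕ → ℕ)
    (r : B) (Mr : ℝ) (hrpt : ∀ x, ‖ι r x‖ ≤ Mr) :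
    ‖∫ ω, (∏ j ∈ Finset.range q, ι b (X (i j) ω)) * ι r (X (i (q-1)) ω) ∂P‖
      ≤ (eLpNorm (ι b) s ν).toReal * (K * ‖r‖) := by
  obtain ⟨q', rfl⟩ : ∃ q', q = q' + 1 := ⟨q - 1, by omega⟩
  have hq'1 : q' + 1 - 1 = q' := by omega
  rw [hq'1]
  have hH1m : Measurable (fun ω => ∏ j ∈ Finset.range (q'+1), ι b (X (i j) ω)) :=
    Finset.measurable_prod _ fun j _ => (hAm b).comp (hXm _)
  have hrm : Measurable (fun ω => ι r (X (i q') ω)) := (hAm r).comp (hXm _)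
  have hptw : ∀ ω, ‖(∏ j ∈ Finset.range (q'+1), ι b (X (i j) ω)) * ι r (X (i q') ω)‖
      ≤ ‖ι b (X (i q') ω)‖ * ‖ι r (X (i q') ω)‖ := by
    intro ω
    rw [norm_mul, Finset.prod_range_succ, norm_mul]
    have h1 : ‖∏ j ∈ Finset.range q', ι b (X (i j) ω)‖ ≤ 1 := by
      rw [norm_prod]
      exact Finset.prod_le_one (fun j _ => norm_nonneg _) (fun j _ => hbpt _)
    calc ‖∏ j ∈ Finset.range q', ι b (X (i j) ω)‖ * ‖ι b (X (i q') ω)‖ * ‖ι r (X (i q') ω)‖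
        ≤ 1 * ‖ι b (X (i q') ω)‖ * ‖ι r (X (i q') ω)‖ := by
          refine mul_le_mul_of_nonneg_right (mul_le_mul_of_nonneg_right h1 (norm_nonneg _))
            (norm_nonneg _)
      _ = ‖ι b (X (i q') ω)‖ * ‖ι r (X (i q') ω)‖ := by ring
  calc ‖∫ ω, (∏ j ∈ Finset.range (q'+1), ι b (X (i j) ω)) * ι r (X (i q') ω) ∂P‖
      ≤ ∫ ω, ‖(∏ j ∈ Finset.range (q'+1), ι b (X (i j) ω)) * ι r (X (i q') ω)‖ ∂P :=
        norm_integral_le_integral_norm _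
    _ ≤ ∫ ω, ‖ι b (X (i q') ω)‖ * ‖ι r (X (i q') ω)‖ ∂P := by
        refine integral_mono ?_ ?_ hptw
        · refine integrable_of_bdd_re (hH1m.mul hrm).norm.aestronglyMeasurable
            (M := 1 * Mr) fun ω => ?_
          rw [abs_of_nonneg (norm_nonneg _), norm_mul]
          refine mul_le_mul ?_ (hrpt _) (norm_nonneg _) zero_le_one
          rw [norm_prod]
          exact Finset.prod_le_one (fun j _ => norm_nonneg _) (fun j _ => hbpt _)
        · refine integrable_of_bdd_re (((hAm b).comp (hXm _)).norm.mul
            hrm.norm).aestronglyMeasurable (M := 1 * Mr) fun ω => ?_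
          rw [abs_of_nonneg (by positivity)]
          exact mul_le_mul (hbpt _) (hrpt _) (norm_nonneg _) zero_le_one
    _ = ∫ x, ‖ι b x‖ * ‖ι r x‖ ∂ν := by
        exact int_eq P X hXm κ hMarkov ν hinv hinit (i q')
          (fun x => ‖ι b x‖ * ‖ι r x‖)
          ((hAm b).norm.mul (hAm r).norm).aestronglyMeasurable
    _ ≤ (eLpNorm (ι b) s ν).toReal * (eLpNorm (ι r) m ν).toReal :=
        holder_abs hms (hAm b) (hAm r) hbpt hrpt
    _ ≤ (eLpNorm (ι b) s ν).toReal * (K * ‖r‖) := by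
        refine mul_le_mul_of_nonneg_left ?_ ENNReal.toReal_nonneg
        calc (eLpNorm (ι r) m ν).toReal ≤ (ENNReal.ofReal (K * ‖r‖)).toReal :=
              ENNReal.toReal_mono ENNReal.ofReal_ne_top (hKle r)
          _ = K * ‖r‖ := ENNReal.toReal_ofReal (by positivity)


end SECLTAux



set_option maxHeartbeats 2000000 in
/-- **Multiple mixing from a spectral gap** (Lemma 6.4 of the paper).
Under conditions (A), (B), (C), (E), the chain is multiple mixing with respect to `B` with
`d₀ = 0` and `s = m/(m−1)`: for every `p ≥ 1` there are `ℓ` and `c > 0` such that for all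
`f ∈ B` with `νf = 0` and `‖f‖_∞ ≤ 1`, all monotone indices `i₀ ≤ … ≤ i_p`, and all
`q ∈ {1,…,p}`,
`|Cov(f(X_{i₀})⋯f(X_{i_{q−1}}), f(X_{i_q})⋯f(X_{i_p}))| ≤ c ‖f‖_s ‖f‖_B^ℓ θ^{i_q−i_{q−1}}`. -/
theorem multiple_mixing_from_spectral_gap
    {Ω 𝓧 B : Type} [MeasurableSpace Ω] [MeasurableSpace 𝓧]
    [NormedAddCommGroup B] [NormedSpace ℂ B] [CompleteSpace B]
    (P : MeasureTheory.Measure Ω) [MeasureTheory.IsProbabilityMeasure P]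
    (X : ℕ → Ω → 𝓧) (hXmeas : ∀ i, Measurable (X i))
    (κ : ProbabilityTheory.Kernel 𝓧 𝓧) [ProbabilityTheory.IsMarkovKernel κ]
    (hMarkov : IsMarkovChain P X κ)
    (ν : MeasureTheory.Measure 𝓧) [MeasureTheory.IsProbabilityMeasure ν]
    (hinv : ν.bind (fun x => κ x) = ν)
    (hinit : MeasureTheory.Measure.map (X 0) P = ν)
    (ι : B →ₗ[ℂ] 𝓧 → ℂ)
    (PB : B →L[ℂ] B) (hPB : MarkovOpCompat ι κ PB)
    (m s : ℝ≥0∞) (hm : 1 ≤ m) (hms : 1 / m + 1 / s = 1)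
    (hA : CondA ι)
    (one : B) (hone : ι one = fun _ => 1)
    (hB : CondB ι ν m)
    (κc θ : ℝ) (hκc : 0 < κc) (hθ : θ ∈ Set.Ico (0:ℝ) 1)
    (hC : CondC ι ν one PB κc θ)
    (hE : CondE ι) :
    ∀ p : ℕ, 0 < p → ∃ (ℓ : ℕ) (c : ℝ), 0 < c ∧
      ∀ b : B, (∫ x, ι b x ∂ν) = 0 → (∀ x, ‖ι b x‖ ≤ 1) →
      ∀ i : ℕ → ℕ, Monotone i → ∀ q : ℕ, 1 ≤ q → q ≤ p →
        ‖
          ((∫ ω, (∏ j ∈ Finset.range q, ι b (X (i j) ω))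
              * (∏ j ∈ Finset.Icc q p, ι b (X (i j) ω)) ∂P)
            - (∫ ω, ∏ j ∈ Finset.range q, ι b (X (i j) ω) ∂P)
              * (∫ ω, ∏ j ∈ Finset.Icc q p, ι b (X (i j) ω) ∂P))‖
          ≤ c * (MeasureTheory.eLpNorm (ι b) s ν).toReal * ‖b‖ ^ ℓ * θ ^ (i q - i (q - 1)) := by
  intro p hp
  obtain ⟨K, hK0, hKle⟩ := hB
  obtain ⟨C₀, hC₀, L', hEp⟩ := hE
  have hAm : ∀ c : B, Measurable (ι c) := hA.1
  set C : ℝ := max C₀ 1 with hCdef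
  have hC1 : (1:ℝ) ≤ C := le_max_right _ _
  have hC0' : (0:ℝ) < C := lt_of_lt_of_le one_pos hC1
  set Dm : ℝ := max (κc + K * ‖one‖) 1 with hDdef
  have hD1 : (1:ℝ) ≤ Dm := le_max_right _ _
  have hD0 : (0:ℝ) < Dm := lt_of_lt_of_le one_pos hD1
  have hCD1 : (1:ℝ) ≤ C * Dm := by nlinarith
  have hCD0 : (0:ℝ) < C * Dm := by positivity
  have hθ0 : (0:ℝ) ≤ θ := hθ.1
  have hE' : ∀ f g : B, (∀ x, ‖ι f x‖ ≤ 1) → (∀ x, ‖ι g x‖ ≤ 1) →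
      ∃ h : B, (∀ x, ι h x = ι f x * ι g x) ∧ ‖h‖ ≤ C * max ‖f‖ ‖g‖ ^ L' := by
    intro f g hf hg
    obtain ⟨h, heq, hn⟩ := hEp f g
      (fun x => by exact hf x)
      (fun x => by exact hg x)
    exact ⟨h, heq, hn.trans (mul_le_mul_of_nonneg_right (le_max_left _ _) (by positivity))⟩
  have hPBn : ∀ (c : B) (g : ℕ), ‖(PB^g) c‖ ≤ Dm * ‖c‖ := by
    intro c g
    refine (SECLTAux.pb_norm ν ι hAm m hm K hK0 hKle one PB κc θ hκc hθ hC c g).trans ?_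
    exact mul_le_mul_of_nonneg_right (le_max_left _ _) (norm_nonneg _)
  have hone1 : ∀ x, ‖ι one x‖ ≤ 1 := fun x => by
    have h1 : ι one x = 1 := congrFun hone x
    rw [h1]; norm_num
  rcases le_or_gt 2 L' with hL2 | hL2
  · -- ──────────────────  case ℓ' ≥ 2  ──────────────────
    refine ⟨(p-1)*(L'-1)+1, K*κc*C*Dm*(C*Dm)^p + 1, by positivity, ?_⟩
    intro b hbint hbabs i hi q hq1 hqp
    obtain ⟨q', rfl⟩ : ∃ q', q = q' + 1 := ⟨q - 1, by omega⟩
    have hbpt : ∀ x, ‖ι b x‖ ≤ 1 := fun x => by exact hbabs x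
    set β : ℝ := C * Dm * ‖b‖^(L'-1) with hβdef
    have hβ0 : (0:ℝ) ≤ β := by positivity
    have hstepA : ∀ (g : ℕ) (u : B), (∀ x, ‖ι u x‖ ≤ 1) → ∃ w : B,
        (∀ x, ι w x = ι b x * ι ((PB^g) u) x) ∧ (∀ x, ‖ι w x‖ ≤ 1) ∧
          ‖w‖ ≤ (fun y => β * y) ‖u‖ := by
      intro g u hu
      have hPBu : ∀ x, ‖ι ((PB^g) u) x‖ ≤ 1 := SECLTAux.pb_ptw κ ι PB hPB u 1 hu g
      obtain ⟨w, hw1, hw2, hw3⟩ := SECLTAux.prod_min ι C hC1 L' hL2 hE' b ((PB^g) u) hbpt hPBu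
      refine ⟨w, hw1, hw2, ?_⟩
      calc ‖w‖ ≤ C * ‖(PB^g) u‖ * ‖b‖^(L'-1) := hw3
        _ ≤ C * (Dm * ‖u‖) * ‖b‖^(L'-1) := by
            have h1 := hPBn u g
            have h2 : (0:ℝ) ≤ ‖b‖^(L'-1) := by positivity
            nlinarith [norm_nonneg ((PB^g) u), norm_nonneg u]
        _ = β * ‖u‖ := by rw [hβdef]; ring
    have hΨmono : Monotone (fun y => β * y) :=
      fun a b' hab => mul_le_mul_of_nonneg_left hab hβ0
    obtain ⟨v, hvpt, hvn, hcov⟩ := SECLTAux.cov_identity P X hXmeas κ hMarkov ν hinv hinit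
      ι hAm PB hPB one hone b hbpt b (fun _ => rfl) (fun y => β * y) hΨmono hstepA
      p (q'+1) hq1 hqp i hi
    rw [SECLTAux.iter_linear β (p-(q'+1)) ‖b‖] at hvn
    simp only [Nat.add_sub_cancel] at hcov ⊢
    set N : ℕ := i (q'+1) - i q' with hNdef
    set r : B := (PB^N) v - (∫ x, ι v x ∂ν) • one with hrdef
    have hrn : ‖r‖ ≤ κc * ‖v‖ * θ^N := hC v N
    have hPBvpt : ∀ x, ‖ι ((PB^N) v) x‖ ≤ 1 := SECLTAux.pb_ptw κ ι PB hPB v 1 hvpt N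
    have hνv : ‖∫ x, ι v x ∂ν‖ ≤ 1 := SECLTAux.norm_int_le ν hvpt
    have hrpt : ∀ x, ‖ι r x‖ ≤ 2 := by
      intro x
      have h1 : ι r x = ι ((PB^N) v) x - (∫ x', ι v x' ∂ν) := by
        rw [hrdef, LinearMap.map_sub, LinearMap.map_smul]
        simp only [Pi.sub_apply, Pi.smul_apply, smul_eq_mul]
        rw [hone]
        ring
      rw [h1]
      calc ‖ι ((PB^N) v) x - (∫ x', ι v x' ∂ν)‖
          ≤ ‖ι ((PB^N) v) x‖ + ‖∫ x', ι v x' ∂ν‖ := norm_sub_le _ _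
        _ ≤ 1 + 1 := add_le_add (hPBvpt x) hνv
        _ = 2 := by norm_num
    rw [hcov]
    have hβpow : ∀ k : ℕ, β^k = (C*Dm)^k * ‖b‖^((L'-1)*k) := by
      intro k
      rw [hβdef, mul_pow, ← pow_mul]
    have hSnn : (0:ℝ) ≤ (eLpNorm (ι b) s ν).toReal := ENNReal.toReal_nonneg
    rcases Nat.eq_zero_or_pos q' with hq'0 | hq'pos
    · -- q = 1 : direct Hölder estimate
      subst hq'0
      have hfin := SECLTAux.cov_final P X hXmeas κ hMarkov ν hinv hinit ι hAm m s hm hms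
        K hK0 hKle b hbpt 1 le_rfl i r 2 hrpt
      simp only [Nat.sub_self] at hfin
      have hvb : ‖v‖ ≤ (C*Dm)^(p-1) * ‖b‖^((L'-1)*(p-1)) * ‖b‖ := by
        rw [hβpow] at hvn
        simpa [mul_assoc] using hvn
      have hcoef : K * κc * (C*Dm)^(p-1) ≤ K*κc*C*Dm*(C*Dm)^p + 1 := by
        have hp1 : (C*Dm)^(p-1) ≤ (C*Dm)^p := pow_le_pow_right₀ hCD1 (by omega)
        have h1 : K*κc*(C*Dm)^(p-1) ≤ K*κc*(C*Dm)^p := by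
          have h2 := mul_le_mul_of_nonneg_left hp1 (by positivity : (0:ℝ) ≤ K*κc)
          calc K*κc*(C*Dm)^(p-1) = K*κc*((C*Dm)^(p-1)) := by ring
            _ ≤ K*κc*((C*Dm)^p) := h2
            _ = K*κc*(C*Dm)^p := by ring
        have h3 : K*κc*(C*Dm)^p ≤ K*κc*C*Dm*(C*Dm)^p := by
          calc K*κc*(C*Dm)^p = K*κc*(C*Dm)^p * 1 := by ring
            _ ≤ K*κc*(C*Dm)^p * (C*Dm) := by
                refine mul_le_mul_of_nonneg_left hCD1 (by positivity)
            _ = K*κc*C*Dm*(C*Dm)^p := by ring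
        linarith
      calc ‖∫ ω, (∏ j ∈ Finset.range 1, ι b (X (i j) ω)) * ι r (X (i 0) ω) ∂P‖
          ≤ (eLpNorm (ι b) s ν).toReal * (K * ‖r‖) := hfin
        _ ≤ (eLpNorm (ι b) s ν).toReal *
            (K * (κc * ((C*Dm)^(p-1) * ‖b‖^((L'-1)*(p-1)) * ‖b‖) * θ^N)) := by
            refine mul_le_mul_of_nonneg_left ?_ hSnn
            refine mul_le_mul_of_nonneg_left ?_ hK0.le
            calc ‖r‖ ≤ κc * ‖v‖ * θ^N := hrn
              _ ≤ κc * ((C*Dm)^(p-1) * ‖b‖^((L'-1)*(p-1)) * ‖b‖) * θ^N := by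
                  refine mul_le_mul_of_nonneg_right
                    (mul_le_mul_of_nonneg_left hvb hκc.le) (by positivity)
        _ = (K * κc * (C*Dm)^(p-1)) *
            ((eLpNorm (ι b) s ν).toReal * ‖b‖^((L'-1)*(p-1)+1) * θ^N) := by
            rw [pow_succ]
            ring
        _ ≤ (K*κc*C*Dm*(C*Dm)^p + 1) *
            ((eLpNorm (ι b) s ν).toReal * ‖b‖^((L'-1)*(p-1)+1) * θ^N) := by
            refine mul_le_mul_of_nonneg_right hcoef (by positivity)
        _ = (K*κc*C*Dm*(C*Dm)^p + 1) * (eLpNorm (ι b) s ν).toReal *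
            ‖b‖^((p-1)*(L'-1)+1) * θ^N := by
            rw [Nat.mul_comm (L'-1) (p-1)]
            ring
    · -- q ≥ 2 : chain over the first block
      obtain ⟨q'', rfl⟩ : ∃ q'', q' = q'' + 1 := ⟨q' - 1, by omega⟩
      have hp2 : q'' + 2 ≤ p := by omega
      set r₂ : B := (2⁻¹ : ℂ) • r with hr₂def
      have h2inv : ‖(2⁻¹ : ℂ)‖ = 2⁻¹ := by
        rw [norm_inv]
        simp
      have hr₂pt : ∀ x, ‖ι r₂ x‖ ≤ 1 := by
        intro x
        rw [hr₂def, LinearMap.map_smul]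
        simp only [Pi.smul_apply, smul_eq_mul, norm_mul]
        rw [h2inv]
        calc 2⁻¹ * ‖ι r x‖ ≤ 2⁻¹ * 2 := by
              refine mul_le_mul_of_nonneg_left (hrpt x) (by norm_num)
          _ = 1 := by norm_num
      have hr₂n : ‖r₂‖ = 2⁻¹ * ‖r‖ := by
        rw [hr₂def, norm_smul, h2inv]
      obtain ⟨c₀, hc₀eq, hc₀pt, hc₀n⟩ :=
        SECLTAux.prod_min ι C hC1 L' hL2 hE' b r₂ hbpt hr₂pt
      set τ₂ : ℕ → ℕ := fun j => i (j+1) with hτ₂def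
      have hτ₂ : Monotone τ₂ := fun a b' hab => hi (by omega)
      obtain ⟨v₃, hv₃pt, hv₃n, hv₃eq⟩ := SECLTAux.chain P X hXmeas κ hMarkov ι hAm PB hPB
        b hbpt (fun y => β * y) hΨmono hstepA τ₂ hτ₂ q'' c₀ hc₀pt
      rw [SECLTAux.iter_linear β q'' ‖c₀‖] at hv₃n
      set ψ₁ : (Fin (i 0 + 1) → 𝓧) → ℂ :=
        fun v' => ι b (v' ⟨i 0, Nat.lt_succ_self _⟩) with hψ₁def
      have hψ₁m : Measurable ψ₁ := (hAm b).comp (measurable_pi_apply _)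
      have hψ₁b : ∀ v', ‖ψ₁ v'‖ ≤ 1 := fun v' => hbpt _
      -- rewrite the covariance integral through the first-block chain
      have hponw : ∀ ω, (∏ j ∈ Finset.range (q''+1+1), ι b (X (i j) ω)) * ι r (X (i (q''+1)) ω)
          = 2 * (ψ₁ (fun j => X (j : ℕ) ω) *
              ((∏ j ∈ Finset.range q'', ι b (X (τ₂ j) ω)) * ι c₀ (X (τ₂ q'') ω))) := by
        intro ω
        have h1 : ι c₀ (X (τ₂ q'') ω)
            = ι b (X (i (q''+1)) ω) * ((2⁻¹:ℂ) * ι r (X (i (q''+1)) ω)) := by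
          rw [hc₀eq, hr₂def, LinearMap.map_smul]
          simp only [Pi.smul_apply, smul_eq_mul]; rfl
        rw [Finset.prod_range_succ, Finset.prod_range_succ']
        rw [h1]
        have h2 : ψ₁ (fun j => X (j : ℕ) ω) = ι b (X (i 0) ω) := rfl
        rw [h2]
        have h3 : ∀ j, ι b (X (τ₂ j) ω) = ι b (X (i (j+1)) ω) := fun j => rfl
        simp only [h3]
        ring
      have hstep1 : ∫ ω, (∏ j ∈ Finset.range (q''+1+1), ι b (X (i j) ω)) *
            ι r (X (i (q''+1)) ω) ∂P
          = 2 * ∫ ω, ψ₁ (fun j => X (j : ℕ) ω) *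
              ((∏ j ∈ Finset.range q'', ι b (X (τ₂ j) ω)) * ι c₀ (X (τ₂ q'') ω)) ∂P := by
        rw [← integral_const_mul]
        congr 1
        funext ω
        exact hponw ω
      have hn₀1 : i 0 ≤ τ₂ 0 := hi (by omega)
      have hstep2 := hv₃eq (i 0) hn₀1 ψ₁ hψ₁m hψ₁b
      have hg01 : i 0 + (i 1 - i 0) = i 1 := Nat.add_sub_cancel' (hi (by omega))
      have hstep3 : ∫ ω, ψ₁ (fun j => X (j : ℕ) ω) * ι v₃ (X (τ₂ 0) ω) ∂P
          = ∫ ω, ψ₁ (fun j => X (j : ℕ) ω) * ι ((PB^(i 1 - i 0)) v₃) (X (i 0) ω) ∂P := by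
        have hτ20 : τ₂ 0 = i 0 + (i 1 - i 0) := by
          have h0 : τ₂ 0 = i 1 := rfl
          rw [h0]
          exact hg01.symm
        rw [hτ20]
        exact SECLTAux.pull P X hXmeas κ hMarkov ι hAm PB hPB (i 1 - i 0) (i 0)
          ψ₁ hψ₁m hψ₁b v₃ hv₃pt
      have hPBv₃pt : ∀ x, ‖ι ((PB^(i 1 - i 0)) v₃) x‖ ≤ 1 :=
        SECLTAux.pb_ptw κ ι PB hPB v₃ 1 hv₃pt (i 1 - i 0)
      have hstep4 : ∫ ω, ψ₁ (fun j => X (j : ℕ) ω) * ι ((PB^(i 1 - i 0)) v₃) (X (i 0) ω) ∂P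
          = ∫ x, ι b x * ι ((PB^(i 1 - i 0)) v₃) x ∂ν := by
        exact SECLTAux.int_eq P X hXmeas κ hMarkov ν hinv hinit (i 0)
          (fun x => ι b x * ι ((PB^(i 1 - i 0)) v₃) x)
          ((hAm b).mul (hAm _)).aestronglyMeasurable
      have hhold : ‖∫ x, ι b x * ι ((PB^(i 1 - i 0)) v₃) x ∂ν‖
          ≤ (eLpNorm (ι b) s ν).toReal * (K * (Dm * ‖v₃‖)) := by
        calc ‖∫ x, ι b x * ι ((PB^(i 1 - i 0)) v₃) x ∂ν‖
            ≤ ∫ x, ‖ι b x * ι ((PB^(i 1 - i 0)) v₃) x‖ ∂ν := norm_integral_le_integral_norm _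
          _ = ∫ x, ‖ι b x‖ * ‖ι ((PB^(i 1 - i 0)) v₃) x‖ ∂ν := by
              congr 1
              funext x
              rw [norm_mul]
          _ ≤ (eLpNorm (ι b) s ν).toReal *
              (eLpNorm (ι ((PB^(i 1 - i 0)) v₃)) m ν).toReal :=
              SECLTAux.holder_abs hms (hAm b) (hAm _) hbpt hPBv₃pt
          _ ≤ (eLpNorm (ι b) s ν).toReal * (K * (Dm * ‖v₃‖)) := by
              refine mul_le_mul_of_nonneg_left ?_ ENNReal.toReal_nonneg
              calc (eLpNorm (ι ((PB^(i 1 - i 0)) v₃)) m ν).toReal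
                  ≤ (ENNReal.ofReal (K * ‖(PB^(i 1 - i 0)) v₃‖)).toReal :=
                    ENNReal.toReal_mono ENNReal.ofReal_ne_top (hKle _)
                _ = K * ‖(PB^(i 1 - i 0)) v₃‖ := ENNReal.toReal_ofReal (by positivity)
                _ ≤ K * (Dm * ‖v₃‖) :=
                    mul_le_mul_of_nonneg_left (hPBn v₃ _) hK0.le
      -- the norm of v₃
      have hv₃b : ‖v₃‖ ≤ β^q'' * (C * (2⁻¹ * (κc * (β^(p-(q''+1+1)) * ‖b‖) * θ^N))
          * ‖b‖^(L'-1)) := by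
        refine hv₃n.trans ?_
        refine mul_le_mul_of_nonneg_left ?_ (by positivity)
        calc ‖c₀‖ ≤ C * ‖r₂‖ * ‖b‖^(L'-1) := hc₀n
          _ ≤ C * (2⁻¹ * (κc * (β^(p-(q''+1+1)) * ‖b‖) * θ^N)) * ‖b‖^(L'-1) := by
              refine mul_le_mul_of_nonneg_right ?_ (by positivity)
              refine mul_le_mul_of_nonneg_left ?_ hC0'.le
              rw [hr₂n]
              refine mul_le_mul_of_nonneg_left ?_ (by norm_num)
              calc ‖r‖ ≤ κc * ‖v‖ * θ^N := hrn
                _ ≤ κc * (β^(p-(q''+1+1)) * ‖b‖) * θ^N := by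
                    refine mul_le_mul_of_nonneg_right
                      (mul_le_mul_of_nonneg_left hvn hκc.le) (by positivity)
      -- put everything together
      have hSnn' : (0:ℝ) ≤ (eLpNorm (ι b) s ν).toReal := ENNReal.toReal_nonneg
      have hfinal : ‖∫ ω, (∏ j ∈ Finset.range (q''+1+1), ι b (X (i j) ω)) *
            ι r (X (i (q''+1)) ω) ∂P‖
          ≤ 2 * ((eLpNorm (ι b) s ν).toReal * (K * (Dm * ‖v₃‖))) := by
        rw [hstep1, hstep2, hstep3, hstep4]
        rw [norm_mul]
        have h2n : ‖(2:ℂ)‖ = 2 := by simp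
        rw [h2n]
        exact mul_le_mul_of_nonneg_left hhold (by norm_num)
      refine hfinal.trans ?_
      -- numerical bookkeeping
      have hexpβ : β^q'' * β^(p-(q''+1+1)) = β^(p-2) := by
        rw [← pow_add]
        congr 1
        omega
      have hne : (L'-1)*q'' + ((L'-1)*(p-(q''+1+1)) + 1 + (L'-1)) = (p-1)*(L'-1)+1 := by
        have h1 : q'' + (p-(q''+1+1)) + 1 = p - 1 := by omega
        calc (L'-1)*q'' + ((L'-1)*(p-(q''+1+1)) + 1 + (L'-1))
            = (L'-1)*(q'' + (p-(q''+1+1)) + 1) + 1 := by ring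
          _ = (L'-1)*(p-1) + 1 := by rw [h1]
          _ = (p-1)*(L'-1) + 1 := by ring
      have hcoef2 : K * Dm * C * κc * (C*Dm)^(p-2) ≤ K*κc*C*Dm*(C*Dm)^p + 1 := by
        have hp1 : (C*Dm)^(p-2) ≤ (C*Dm)^p := pow_le_pow_right₀ hCD1 (by omega)
        have h1 : K * Dm * C * κc * (C*Dm)^(p-2) ≤ K * Dm * C * κc * (C*Dm)^p := by
          have h2 := mul_le_mul_of_nonneg_left hp1 (by positivity : (0:ℝ) ≤ K*Dm*C*κc)
          calc K*Dm*C*κc*(C*Dm)^(p-2) = K*Dm*C*κc*((C*Dm)^(p-2)) := by ring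
            _ ≤ K*Dm*C*κc*((C*Dm)^p) := h2
            _ = K*Dm*C*κc*(C*Dm)^p := by ring
        have h3 : K*Dm*C*κc*(C*Dm)^p = K*κc*C*Dm*(C*Dm)^p := by ring
        linarith
      calc 2 * ((eLpNorm (ι b) s ν).toReal * (K * (Dm * ‖v₃‖)))
          ≤ 2 * ((eLpNorm (ι b) s ν).toReal * (K * (Dm *
            (β^q'' * (C * (2⁻¹ * (κc * (β^(p-(q''+1+1)) * ‖b‖) * θ^N)) * ‖b‖^(L'-1)))))) := by
            refine mul_le_mul_of_nonneg_left ?_ (by norm_num)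
            refine mul_le_mul_of_nonneg_left ?_ hSnn'
            refine mul_le_mul_of_nonneg_left ?_ hK0.le
            exact mul_le_mul_of_nonneg_left hv₃b hD0.le
        _ = (K * Dm * C * κc * (C*Dm)^(p-2)) * ((eLpNorm (ι b) s ν).toReal *
            ‖b‖^((p-1)*(L'-1)+1) * θ^N) := by
            have e1 : β^q'' * (C * (2⁻¹ * (κc * (β^(p-(q''+1+1)) * ‖b‖) * θ^N)) * ‖b‖^(L'-1))
                = C * κc * 2⁻¹ * (β^q'' * β^(p-(q''+1+1))) * ‖b‖ * ‖b‖^(L'-1) * θ^N := by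
              ring
            rw [e1, hexpβ, hβpow (p-2)]
            have hne2 : (p-1)*(L'-1)+1 = (L'-1)*(p-2) + 1 + (L'-1) := by
              have h1 : (p-2) + 1 = p - 1 := by omega
              calc (p-1)*(L'-1)+1 = (L'-1)*(p-1) + 1 := by ring
                _ = (L'-1)*((p-2)+1) + 1 := by rw [h1]
                _ = (L'-1)*(p-2) + 1 + (L'-1) := by ring
            have e2 : ‖b‖^((p-1)*(L'-1)+1) = ‖b‖^((L'-1)*(p-2)) * ‖b‖ * ‖b‖^(L'-1) := by
              rw [hne2, pow_add, pow_add, pow_one]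
            rw [e2]
            ring
        _ ≤ (K*κc*C*Dm*(C*Dm)^p + 1) * ((eLpNorm (ι b) s ν).toReal *
            ‖b‖^((p-1)*(L'-1)+1) * θ^N) := by
            refine mul_le_mul_of_nonneg_right hcoef2 (by positivity)
        _ = (K*κc*C*Dm*(C*Dm)^p + 1) * (eLpNorm (ι b) s ν).toReal *
            ‖b‖^((p-1)*(L'-1)+1) * θ^N := by ring
  · -- ──────────────────  case ℓ' ≤ 1  ──────────────────
    have hL01 : L' = 0 ∨ L' = 1 := by omega
    rcases hL01 with hL0 | hL1
    · -- ℓ' = 0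
      refine ⟨0, K*κc*C + 1, by positivity, ?_⟩
      intro b hbint hbabs i hi q hq1 hqp
      obtain ⟨q', rfl⟩ : ∃ q', q = q' + 1 := ⟨q - 1, by omega⟩
      have hbpt : ∀ x, ‖ι b x‖ ≤ 1 := fun x => by exact hbabs x
      obtain ⟨b', hb'eq0, hb'n0⟩ := hE' b one hbpt hone1
      have hb'eq : ∀ x, ι b' x = ι b x := by
        intro x
        rw [hb'eq0 x, congrFun hone x, mul_one]
      have hb'n : ‖b'‖ ≤ C := by
        calc ‖b'‖ ≤ C * max ‖b‖ ‖one‖ ^ L' := hb'n0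
          _ = C := by rw [hL0, pow_zero, mul_one]
      have hstep0 : ∀ (g : ℕ) (u : B), (∀ x, ‖ι u x‖ ≤ 1) → ∃ w : B,
          (∀ x, ι w x = ι b x * ι ((PB^g) u) x) ∧ (∀ x, ‖ι w x‖ ≤ 1) ∧
            ‖w‖ ≤ (fun _ : ℝ => C) ‖u‖ := by
        intro g u hu
        have hPBu : ∀ x, ‖ι ((PB^g) u) x‖ ≤ 1 := SECLTAux.pb_ptw κ ι PB hPB u 1 hu g
        obtain ⟨w, hw1, hw2⟩ := hE' b ((PB^g) u) hbpt hPBu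
        have hwpt : ∀ x, ‖ι w x‖ ≤ 1 := by
          intro x
          rw [hw1 x, norm_mul]
          calc ‖ι b x‖ * ‖ι ((PB^g) u) x‖ ≤ 1 * 1 :=
                mul_le_mul (hbpt x) (hPBu x) (norm_nonneg _) zero_le_one
            _ = 1 := by ring
        refine ⟨w, hw1, hwpt, ?_⟩
        calc ‖w‖ ≤ C * max ‖b‖ ‖(PB^g) u‖ ^ L' := hw2
          _ = C := by rw [hL0, pow_zero, mul_one]
      obtain ⟨v, hvpt, hvn, hcov⟩ := SECLTAux.cov_identity P X hXmeas κ hMarkov ν hinv hinit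
        ι hAm PB hPB one hone b hbpt b' hb'eq (fun _ : ℝ => C) monotone_const hstep0
        p (q'+1) hq1 hqp i hi
      have hvb : ‖v‖ ≤ C := by
        calc ‖v‖ ≤ (fun _ : ℝ => C)^[p-(q'+1)] ‖b'‖ := hvn
          _ ≤ max ‖b'‖ C := SECLTAux.iter_const C _ _
          _ = C := max_eq_right hb'n
      simp only [Nat.add_sub_cancel] at hcov ⊢
      set N : ℕ := i (q'+1) - i q' with hNdef
      set r : B := (PB^N) v - (∫ x, ι v x ∂ν) • one with hrdef
      have hrn : ‖r‖ ≤ κc * ‖v‖ * θ^N := hC v N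
      have hPBvpt : ∀ x, ‖ι ((PB^N) v) x‖ ≤ 1 := SECLTAux.pb_ptw κ ι PB hPB v 1 hvpt N
      have hνv : ‖∫ x, ι v x ∂ν‖ ≤ 1 := SECLTAux.norm_int_le ν hvpt
      have hrpt : ∀ x, ‖ι r x‖ ≤ 2 := by
        intro x
        have h1 : ι r x = ι ((PB^N) v) x - (∫ x', ι v x' ∂ν) := by
          rw [hrdef, LinearMap.map_sub, LinearMap.map_smul]
          simp only [Pi.sub_apply, Pi.smul_apply, smul_eq_mul]
          rw [hone]
          ring
        rw [h1]
        calc ‖ι ((PB^N) v) x - (∫ x', ι v x' ∂ν)‖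
            ≤ ‖ι ((PB^N) v) x‖ + ‖∫ x', ι v x' ∂ν‖ := norm_sub_le _ _
          _ ≤ 1 + 1 := add_le_add (hPBvpt x) hνv
          _ = 2 := by norm_num
      rw [hcov]
      have hfin := SECLTAux.cov_final P X hXmeas κ hMarkov ν hinv hinit ι hAm m s hm hms
        K hK0 hKle b hbpt (q'+1) (by omega) i r 2 hrpt
      simp only [Nat.add_sub_cancel] at hfin
      have hSnn : (0:ℝ) ≤ (eLpNorm (ι b) s ν).toReal := ENNReal.toReal_nonneg
      calc ‖∫ ω, (∏ j ∈ Finset.range (q'+1), ι b (X (i j) ω)) * ι r (X (i q') ω) ∂P‖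
          ≤ (eLpNorm (ι b) s ν).toReal * (K * ‖r‖) := hfin
        _ ≤ (eLpNorm (ι b) s ν).toReal * (K * (κc * C * θ^N)) := by
            refine mul_le_mul_of_nonneg_left ?_ hSnn
            refine mul_le_mul_of_nonneg_left ?_ hK0.le
            calc ‖r‖ ≤ κc * ‖v‖ * θ^N := hrn
              _ ≤ κc * C * θ^N := by
                  refine mul_le_mul_of_nonneg_right
                    (mul_le_mul_of_nonneg_left hvb hκc.le) (by positivity)
        _ = (K * κc * C) * ((eLpNorm (ι b) s ν).toReal * ‖b‖^0 * θ^N) := by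
            rw [pow_zero]
            ring
        _ ≤ (K*κc*C + 1) * ((eLpNorm (ι b) s ν).toReal * ‖b‖^0 * θ^N) := by
            refine mul_le_mul_of_nonneg_right (by linarith) (by positivity)
        _ = (K*κc*C + 1) * (eLpNorm (ι b) s ν).toReal * ‖b‖^0 * θ^N := by ring
    · -- ℓ' = 1
      refine ⟨1, K*κc*(C*Dm)^p + 1, by positivity, ?_⟩
      intro b hbint hbabs i hi q hq1 hqp
      obtain ⟨q', rfl⟩ : ∃ q', q = q' + 1 := ⟨q - 1, by omega⟩
      have hbpt : ∀ x, ‖ι b x‖ ≤ 1 := fun x => by exact hbabs x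
      have hstep1 : ∀ (g : ℕ) (u : B), (∀ x, ‖ι u x‖ ≤ 1) → ∃ w : B,
          (∀ x, ι w x = ι b x * ι ((PB^g) u) x) ∧ (∀ x, ‖ι w x‖ ≤ 1) ∧
            ‖w‖ ≤ (fun y => C * max ‖b‖ (Dm * y)) ‖u‖ := by
        intro g u hu
        have hPBu : ∀ x, ‖ι ((PB^g) u) x‖ ≤ 1 := SECLTAux.pb_ptw κ ι PB hPB u 1 hu g
        obtain ⟨w, hw1, hw2⟩ := hE' b ((PB^g) u) hbpt hPBu
        have hwpt : ∀ x, ‖ι w x‖ ≤ 1 := by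
          intro x
          rw [hw1 x, norm_mul]
          calc ‖ι b x‖ * ‖ι ((PB^g) u) x‖ ≤ 1 * 1 :=
                mul_le_mul (hbpt x) (hPBu x) (norm_nonneg _) zero_le_one
            _ = 1 := by ring
        refine ⟨w, hw1, hwpt, ?_⟩
        calc ‖w‖ ≤ C * max ‖b‖ ‖(PB^g) u‖ ^ L' := hw2
          _ = C * max ‖b‖ ‖(PB^g) u‖ := by rw [hL1, pow_one]
          _ ≤ C * max ‖b‖ (Dm * ‖u‖) :=
              mul_le_mul_of_nonneg_left (max_le_max le_rfl (hPBn u g)) hC0'.le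
      have hΨmono : Monotone (fun y => C * max ‖b‖ (Dm * y)) := by
        intro a b' hab
        refine mul_le_mul_of_nonneg_left (max_le_max le_rfl ?_) hC0'.le
        exact mul_le_mul_of_nonneg_left hab hD0.le
      obtain ⟨v, hvpt, hvn, hcov⟩ := SECLTAux.cov_identity P X hXmeas κ hMarkov ν hinv hinit
        ι hAm PB hPB one hone b hbpt b (fun _ => rfl) (fun y => C * max ‖b‖ (Dm * y))
        hΨmono hstep1 p (q'+1) hq1 hqp i hi
      have hvb : ‖v‖ ≤ (C*Dm)^p * ‖b‖ := by
        calc ‖v‖ ≤ (fun y => C * max ‖b‖ (Dm * y))^[p-(q'+1)] ‖b‖ := hvn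
          _ ≤ (C*Dm)^(p-(q'+1)) * max ‖b‖ ‖b‖ :=
              SECLTAux.iter_maxform C Dm ‖b‖ hC1 hD1 (norm_nonneg _) _ _ (norm_nonneg _)
          _ = (C*Dm)^(p-(q'+1)) * ‖b‖ := by rw [max_self]
          _ ≤ (C*Dm)^p * ‖b‖ := by
              refine mul_le_mul_of_nonneg_right
                (pow_le_pow_right₀ hCD1 (by omega)) (norm_nonneg _)
      simp only [Nat.add_sub_cancel] at hcov ⊢
      set N : ℕ := i (q'+1) - i q' with hNdef
      set r : B := (PB^N) v - (∫ x, ι v x ∂ν) • one with hrdef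
      have hrn : ‖r‖ ≤ κc * ‖v‖ * θ^N := hC v N
      have hPBvpt : ∀ x, ‖ι ((PB^N) v) x‖ ≤ 1 := SECLTAux.pb_ptw κ ι PB hPB v 1 hvpt N
      have hνv : ‖∫ x, ι v x ∂ν‖ ≤ 1 := SECLTAux.norm_int_le ν hvpt
      have hrpt : ∀ x, ‖ι r x‖ ≤ 2 := by
        intro x
        have h1 : ι r x = ι ((PB^N) v) x - (∫ x', ι v x' ∂ν) := by
          rw [hrdef, LinearMap.map_sub, LinearMap.map_smul]
          simp only [Pi.sub_apply, Pi.smul_apply, smul_eq_mul]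
          rw [hone]
          ring
        rw [h1]
        calc ‖ι ((PB^N) v) x - (∫ x', ι v x' ∂ν)‖
            ≤ ‖ι ((PB^N) v) x‖ + ‖∫ x', ι v x' ∂ν‖ := norm_sub_le _ _
          _ ≤ 1 + 1 := add_le_add (hPBvpt x) hνv
          _ = 2 := by norm_num
      rw [hcov]
      have hfin := SECLTAux.cov_final P X hXmeas κ hMarkov ν hinv hinit ι hAm m s hm hms
        K hK0 hKle b hbpt (q'+1) (by omega) i r 2 hrpt
      simp only [Nat.add_sub_cancel] at hfin
      have hSnn : (0:ℝ) ≤ (eLpNorm (ι b) s ν).toReal := ENNReal.toReal_nonneg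
      calc ‖∫ ω, (∏ j ∈ Finset.range (q'+1), ι b (X (i j) ω)) * ι r (X (i q') ω) ∂P‖
          ≤ (eLpNorm (ι b) s ν).toReal * (K * ‖r‖) := hfin
        _ ≤ (eLpNorm (ι b) s ν).toReal * (K * (κc * ((C*Dm)^p * ‖b‖) * θ^N)) := by
            refine mul_le_mul_of_nonneg_left ?_ hSnn
            refine mul_le_mul_of_nonneg_left ?_ hK0.le
            calc ‖r‖ ≤ κc * ‖v‖ * θ^N := hrn
              _ ≤ κc * ((C*Dm)^p * ‖b‖) * θ^N := by
                  refine mul_le_mul_of_nonneg_right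
                    (mul_le_mul_of_nonneg_left hvb hκc.le) (by positivity)
        _ = (K * κc * (C*Dm)^p) * ((eLpNorm (ι b) s ν).toReal * ‖b‖^1 * θ^N) := by
            rw [pow_one]
            ring
        _ ≤ (K*κc*(C*Dm)^p + 1) * ((eLpNorm (ι b) s ν).toReal * ‖b‖^1 * θ^N) := by
            refine mul_le_mul_of_nonneg_right (by linarith) (by positivity)
        _ = (K*κc*(C*Dm)^p + 1) * (eLpNorm (ι b) s ν).toReal * ‖b‖^1 * θ^N := by ring
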